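/- arXiv:1707.04191 — 5 statements merged into one kernel-verified Lean document; each statement's English description precedes it below -/
import Mathlib

section
/- Let k ≥ 1, let μ ∈ ℝ^k and let Σ be a real symmetric positive definite k×k matrix. Then the infimum of ∫ g dP over all probability measures P ∈ 𝒫(μ,Σ) equals p(Ω(μ,Σ)), the optimal value of the semidefinite program (P). (Theorem 1 of the paper.) -/
open Matrix MeasureTheory
open scoped ENNReal NNReal

/-- The constraint matrices `C_0 = 0` and
`C_i = [[0, e_i/2], [e_iᵀ/2, -ylow]]` for `i = 1,…,k` of the primal SDP (P). -/
noncomputable def Cmat (k : ℕ) (ylow : ℝ) : Fin (k + 1) → Matrix (Fin (k + 1)) (Fin (k + 1)) ℝ :=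
  Fin.cases 0 fun i : Fin k =>
    Matrix.of fun a b =>
      if a = Fin.last k ∧ b = Fin.last k then -ylow
      else if a = i.castSucc ∧ b = Fin.last k then 1 / 2
      else if a = Fin.last k ∧ b = i.castSucc then 1 / 2
      else 0

/-- A symmetric matrix `M` is feasible for (P) if `M - C_i ⪯ 0` for `i = 0,…,k`. -/
def PFeasible (k : ℕ) (ylow : ℝ) (M : Matrix (Fin (k + 1)) (Fin (k + 1)) ℝ) : Prop :=
  M.IsSymm ∧ ∀ i : Fin (k + 1), (Cmat k ylow i - M).PosSemidef

/-- The optimal value `p(Ω) = sup { ⟨Ω, M⟩ : M feasible }` of the primal SDP (P). -/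
noncomputable def pval (k : ℕ) (ylow : ℝ) (Ω : Matrix (Fin (k + 1)) (Fin (k + 1)) ℝ) : ℝ :=
  sSup {t : ℝ | ∃ M, PFeasible k ylow M ∧ t = (Ω * M).trace}

/-- `g(ξ) = min(ξ_1, …, ξ_k, ylow) - ylow`. -/
noncomputable def gfun (k : ℕ) (ylow : ℝ) (ξ : Fin k → ℝ) : ℝ :=
  min (⨅ i, ξ i) ylow - ylow

/-- The second order moment matrix `Ω(μ,Σ) = [[Σ + μμᵀ, μ], [μᵀ, 1]]`. -/
noncomputable def OmegaMat (k : ℕ) (μv : Fin k → ℝ) (Sm : Matrix (Fin k) (Fin k) ℝ) :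
    Matrix (Fin (k + 1)) (Fin (k + 1)) ℝ :=
  Matrix.of fun a b =>
    Fin.lastCases (Fin.lastCases 1 (fun j => μv j) b)
      (fun i => Fin.lastCases (μv i) (fun j => Sm i j + μv i * μv j) b) a

/-- `𝒫(μ,Σ)`: Borel probability measures on `ℝ^k` with mean `μ` and second moment
matrix `Σ + μμᵀ`. -/
def MomentSet (k : ℕ) (μv : Fin k → ℝ) (Sm : Matrix (Fin k) (Fin k) ℝ) :
    Set (Measure (Fin k → ℝ)) :=
  {P | IsProbabilityMeasure P ∧
    (∀ i, Integrable (fun ξ => ξ i) P) ∧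
    (∀ i j, Integrable (fun ξ => ξ i * ξ j) P) ∧
    (∀ i, ∫ ξ, ξ i ∂P = μv i) ∧
    (∀ i j, ∫ ξ, ξ i * ξ j ∂P = Sm i j + μv i * μv j)}


namespace SDP

variable {k : ℕ} {ylow : ℝ}

noncomputable def sing (k : ℕ) (a b : Fin (k+1)) (c : ℝ) : Matrix (Fin (k+1)) (Fin (k+1)) ℝ :=
  Matrix.of fun p q => if p = a ∧ q = b then c else 0

lemma trace_mul_eq (Ω N : Matrix (Fin (k+1)) (Fin (k+1)) ℝ) :
    (Ω * N).trace = ∑ a, ∑ b, Ω a b * N b a := by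
  simp [Matrix.trace, Matrix.mul_apply, Matrix.diag]

lemma trace_sing_mul (a b : Fin (k+1)) (c : ℝ) (X : Matrix (Fin (k+1)) (Fin (k+1)) ℝ) :
    (sing k a b c * X).trace = c * X b a := by
  simp [trace_mul_eq, sing, ite_and, Finset.sum_ite_eq, mul_ite, ite_mul, zero_mul, mul_zero]

lemma dot_sing (a b : Fin (k+1)) (c : ℝ) (x : Fin (k+1) → ℝ) :
    x ⬝ᵥ (sing k a b c *ᵥ x) = c * x a * x b := by
  simp [sing, dotProduct, mulVec, ite_and, Finset.mul_sum, mul_ite, ite_mul, zero_mul, mul_zero,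
    Finset.sum_ite_eq, Finset.sum_ite_eq']
  ring

lemma cmat_zero : Cmat k ylow 0 = 0 := rfl

lemma cmat_succ (i : Fin k) :
    Cmat k ylow i.succ =
      sing k i.castSucc (Fin.last k) (1/2) + sing k (Fin.last k) i.castSucc (1/2) +
        sing k (Fin.last k) (Fin.last k) (-ylow) := by
  have hne : i.castSucc ≠ Fin.last k := (Fin.castSucc_lt_last i).ne
  ext p q
  simp only [Cmat, Fin.cases_succ, Matrix.of_apply, sing, Matrix.add_apply]
  by_cases hp : p = Fin.last k <;> by_cases hq : q = Fin.last k <;>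
    by_cases hpi : p = i.castSucc <;> by_cases hqi : q = i.castSucc <;>
    simp_all



lemma psd_dot {n : ℕ} {X : Matrix (Fin n) (Fin n) ℝ} (hX : X.PosSemidef) (x : Fin n → ℝ) :
    0 ≤ x ⬝ᵥ (X *ᵥ x) := by
  have := hX.dotProduct_mulVec_nonneg x
  rwa [star_trivial] at this

lemma psd_symm_apply {n : ℕ} {X : Matrix (Fin n) (Fin n) ℝ} (hX : X.IsHermitian)
    (a b : Fin n) : X a b = X b a := by
  have := congrFun (congrFun hX a) b
  simpa [Matrix.conjTranspose_apply] using this.symm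

lemma psd_diag {n : ℕ} {X : Matrix (Fin n) (Fin n) ℝ} (hX : X.PosSemidef) (a : Fin n) :
    0 ≤ X a a := by
  have h := psd_dot hX (Pi.single a 1)
  simpa [Matrix.mulVec_single, dotProduct_single, single_dotProduct] using h

lemma psd_smul {n : ℕ} {X : Matrix (Fin n) (Fin n) ℝ} (hX : X.PosSemidef) {c : ℝ} (hc : 0 ≤ c) :
    (c • X).PosSemidef := by
  refine Matrix.PosSemidef.of_dotProduct_mulVec_nonneg ?_ fun x => ?_
  · unfold Matrix.IsHermitian
    rw [Matrix.conjTranspose_smul, hX.1]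
    simp
  · have := hX.dotProduct_mulVec_nonneg x
    rw [Matrix.smul_mulVec, dotProduct_smul]
    exact smul_nonneg hc this

lemma psd_entry_zero {n : ℕ} {X : Matrix (Fin n) (Fin n) ℝ} (hX : X.PosSemidef)
    {b : Fin n} (hb : X b b = 0) (a : Fin n) : X a b = 0 := by
  rcases eq_or_ne a b with rfl | hab
  · exact hb
  · have hsym : X b a = X a b := psd_symm_apply hX.1 b a
    have key : ∀ t : ℝ, 0 ≤ t * t * X a a + 2 * t * X a b := by
      intro t
      have h := psd_dot hX (t • (Pi.single a 1 : Fin n → ℝ) + (Pi.single b 1 : Fin n → ℝ))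
      have e : X *ᵥ (t • (Pi.single a 1 : Fin n → ℝ) + (Pi.single b 1 : Fin n → ℝ)) =
          fun i => t * X i a + X i b := by
        funext i
        simp [Matrix.mulVec_add, Matrix.mulVec_smul, Matrix.mulVec_single, mul_comm]
      rw [e] at h
      have e2 : (t • (Pi.single a 1 : Fin n → ℝ) + (Pi.single b 1 : Fin n → ℝ)) ⬝ᵥ (fun i => t * X i a + X i b)
          = t * (t * X a a + X a b) + (t * X b a + X b b) := by
        simp [dotProduct, Pi.single_apply, ite_mul, zero_mul, add_mul,
          Finset.sum_add_distrib, Finset.sum_ite_eq', hab, Ne.symm hab]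
      rw [e2] at h
      rw [hb, hsym] at h
      nlinarith [h]
    have hXaa := psd_diag hX a
    by_contra h0
    have hu : 0 < X a b * X a b := mul_self_pos.2 h0
    rcases eq_or_lt_of_le hXaa with hd | hd
    · have h := key (-(X a b))
      nlinarith [h]
    · have h := key (-(X a b / X a a))
      have hd0 : X a a ≠ 0 := ne_of_gt hd
      have hval : (-(X a b / X a a)) * (-(X a b / X a a)) * X a a
          + 2 * (-(X a b / X a a)) * X a b = -(X a b * X a b / X a a) := by
        field_simp
        ring
      rw [hval] at h
      have hq : 0 < X a b * X a b / X a a := div_pos hu hd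
      linarith

lemma posSemidef_outer {n : ℕ} (x : Fin n → ℝ) :
    (Matrix.of fun a b => x a * x b).PosSemidef := by
  refine Matrix.PosSemidef.of_dotProduct_mulVec_nonneg ?_ fun y => ?_
  · unfold Matrix.IsHermitian
    ext a b
    simp [Matrix.conjTranspose_apply, mul_comm]
  · rw [star_trivial]
    have e : (Matrix.of fun a b => x a * x b) *ᵥ y = fun a => x a * (x ⬝ᵥ y) := by
      funext a
      simp [Matrix.mulVec, dotProduct, Finset.mul_sum, mul_assoc]
    rw [e]
    have e2 : y ⬝ᵥ (fun a => x a * (x ⬝ᵥ y)) = (∑ a, y a * x a) * (x ⬝ᵥ y) := by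
      rw [Finset.sum_mul]
      simp [dotProduct, mul_assoc]
    rw [e2]
    have e3 : (∑ a, y a * x a) = x ⬝ᵥ y := by
      simp [dotProduct, mul_comm]
    rw [e3]
    exact mul_self_nonneg _

section GQ

variable {k : ℕ} {ylow : ℝ}

def phi (k : ℕ) (ξ : Fin k → ℝ) : Fin (k+1) → ℝ := Fin.snoc ξ 1

@[simp] lemma phi_castSucc (ξ : Fin k → ℝ) (i : Fin k) : phi k ξ i.castSucc = ξ i :=
  Fin.snoc_castSucc ..

@[simp] lemma phi_last (ξ : Fin k → ℝ) : phi k ξ (Fin.last k) = 1 :=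
  Fin.snoc_last ..

lemma dot_cmat_zero (x : Fin (k+1) → ℝ) : x ⬝ᵥ (Cmat k ylow 0 *ᵥ x) = 0 := by
  simp [cmat_zero]

lemma dot_cmat_succ (i : Fin k) (x : Fin (k+1) → ℝ) :
    x ⬝ᵥ (Cmat k ylow i.succ *ᵥ x) =
      x i.castSucc * x (Fin.last k) - ylow * (x (Fin.last k) * x (Fin.last k)) := by
  rw [cmat_succ, Matrix.add_mulVec, Matrix.add_mulVec, dotProduct_add, dotProduct_add,
    dot_sing, dot_sing, dot_sing]
  ring

lemma trace_cmat_zero_mul (X : Matrix (Fin (k+1)) (Fin (k+1)) ℝ) :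
    (Cmat k ylow 0 * X).trace = 0 := by
  simp [cmat_zero]

lemma trace_cmat_succ_mul (i : Fin k) (X : Matrix (Fin (k+1)) (Fin (k+1)) ℝ) :
    (Cmat k ylow i.succ * X).trace =
      (1/2) * X (Fin.last k) i.castSucc + (1/2) * X i.castSucc (Fin.last k)
        - ylow * X (Fin.last k) (Fin.last k) := by
  rw [cmat_succ, Matrix.add_mul, Matrix.add_mul, Matrix.trace_add, Matrix.trace_add,
    trace_sing_mul, trace_sing_mul, trace_sing_mul]
  ring

lemma gfun_le_zero (ξ : Fin k → ℝ) : gfun k ylow ξ ≤ 0 := by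
  unfold gfun
  have := min_le_right (⨅ i, ξ i) ylow
  linarith

lemma gfun_le (i : Fin k) (ξ : Fin k → ℝ) : gfun k ylow ξ ≤ ξ i - ylow := by
  unfold gfun
  have h1 : (⨅ j, ξ j) ≤ ξ i := ciInf_le (Finite.bddBelow_range _) i
  have := min_le_left (⨅ j, ξ j) ylow
  linarith

lemma le_gfun (hk : 0 < k) {q : ℝ} {ξ : Fin k → ℝ} (h0 : q ≤ 0)
    (h : ∀ i, q ≤ ξ i - ylow) : q ≤ gfun k ylow ξ := by
  have : Nonempty (Fin k) := ⟨⟨0, hk⟩⟩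
  unfold gfun
  rw [le_sub_iff_add_le]
  refine le_min (le_ciInf fun i => ?_) (by linarith)
  have := h i; linarith

lemma gfun_abs_le (hk : 0 < k) (ξ : Fin k → ℝ) :
    |gfun k ylow ξ| ≤ ∑ i, |ξ i - ylow| := by
  have : Nonempty (Fin k) := ⟨⟨0, hk⟩⟩
  have hsum : (0:ℝ) ≤ ∑ i, |ξ i - ylow| := Finset.sum_nonneg fun i _ => abs_nonneg _
  rw [abs_of_nonpos (gfun_le_zero ξ)]
  unfold gfun
  rcases le_total (⨅ i, ξ i) ylow with hle | hle
  · rw [min_eq_left hle]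
    obtain ⟨i, hi⟩ := exists_eq_ciInf_of_finite (f := ξ)
    rw [← hi]
    have h1 : ylow - ξ i ≤ |ξ i - ylow| := by
      rw [abs_sub_comm]; exact le_abs_self _
    have h2 : |ξ i - ylow| ≤ ∑ j, |ξ j - ylow| :=
      Finset.single_le_sum (f := fun j => |ξ j - ylow|) (fun j _ => abs_nonneg _)
        (Finset.mem_univ i)
    linarith
  · rw [min_eq_right hle]; linarith

lemma gfun_measurable : Measurable (gfun k ylow) := by
  apply Measurable.sub _ measurable_const
  exact (Measurable.min (by exact Measurable.iInf fun i => measurable_pi_apply i)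
    measurable_const)

lemma gfun_integrable (hk : 0 < k) {P : Measure (Fin k → ℝ)} [IsFiniteMeasure P]
    (hi : ∀ i, Integrable (fun ξ => ξ i) P) : Integrable (gfun k ylow) P := by
  refine Integrable.mono' (g := fun ξ => ∑ i, |ξ i - ylow|) ?_
    gfun_measurable.aestronglyMeasurable ?_
  · exact integrable_finset_sum _ fun i _ => ((hi i).sub (integrable_const _)).abs
  · filter_upwards with ξ
    exact gfun_abs_le hk ξ

lemma dot_eq_sum (N : Matrix (Fin (k+1)) (Fin (k+1)) ℝ) (x : Fin (k+1) → ℝ) :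
    x ⬝ᵥ (N *ᵥ x) = ∑ a, ∑ b, N a b * (x a * x b) := by
  simp only [dotProduct, Matrix.mulVec, Finset.mul_sum]
  exact Finset.sum_congr rfl fun a _ => Finset.sum_congr rfl fun b _ => by ring

lemma feasible_dot_le_gfun (hk : 0 < k) {M : Matrix (Fin (k+1)) (Fin (k+1)) ℝ}
    (hM : PFeasible k ylow M) (ξ : Fin k → ℝ) :
    (phi k ξ) ⬝ᵥ (M *ᵥ phi k ξ) ≤ gfun k ylow ξ := by
  apply le_gfun hk
  · have h := psd_dot (hM.2 0) (phi k ξ)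
    rw [Matrix.sub_mulVec, dotProduct_sub, dot_cmat_zero] at h
    linarith
  · intro i
    have h := psd_dot (hM.2 i.succ) (phi k ξ)
    rw [Matrix.sub_mulVec, dotProduct_sub, dot_cmat_succ] at h
    simp only [phi_castSucc, phi_last] at h
    linarith

end GQ

section WD

variable {k : ℕ} {ylow : ℝ} {μv : Fin k → ℝ} {Sm : Matrix (Fin k) (Fin k) ℝ}

lemma omega_castSucc_castSucc (i j : Fin k) :
    OmegaMat k μv Sm i.castSucc j.castSucc = Sm i j + μv i * μv j := by
  simp [OmegaMat]

lemma omega_castSucc_last (i : Fin k) :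
    OmegaMat k μv Sm i.castSucc (Fin.last k) = μv i := by
  simp [OmegaMat]

lemma omega_last_castSucc (j : Fin k) :
    OmegaMat k μv Sm (Fin.last k) j.castSucc = μv j := by
  simp [OmegaMat]

lemma omega_last_last : OmegaMat k μv Sm (Fin.last k) (Fin.last k) = 1 := by
  simp [OmegaMat]

lemma integrable_phi_mul {P : Measure (Fin k → ℝ)} (hP : P ∈ MomentSet k μv Sm)
    (a b : Fin (k+1)) : Integrable (fun ξ => phi k ξ a * phi k ξ b) P := by
  haveI := hP.1
  induction a using Fin.lastCases with
  | last =>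
    induction b using Fin.lastCases with
    | last => simpa using integrable_const (1:ℝ)
    | cast j => simpa using hP.2.1 j
  | cast i =>
    induction b using Fin.lastCases with
    | last => simpa using hP.2.1 i
    | cast j => simpa using hP.2.2.1 i j

lemma moment_entry {P : Measure (Fin k → ℝ)} (hP : P ∈ MomentSet k μv Sm)
    (a b : Fin (k+1)) :
    ∫ ξ, phi k ξ a * phi k ξ b ∂P = OmegaMat k μv Sm a b := by
  haveI := hP.1
  induction a using Fin.lastCases with
  | last =>
    induction b using Fin.lastCases with
    | last => simp [omega_last_last]
    | cast j => simp [omega_last_castSucc, hP.2.2.2.1 j]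
  | cast i =>
    induction b using Fin.lastCases with
    | last => simp [omega_castSucc_last, hP.2.2.2.1 i]
    | cast j => simp [omega_castSucc_castSucc, hP.2.2.2.2 i j]

lemma weak_duality (hk : 0 < k) {P : Measure (Fin k → ℝ)} (hP : P ∈ MomentSet k μv Sm)
    {M : Matrix (Fin (k+1)) (Fin (k+1)) ℝ} (hM : PFeasible k ylow M) :
    (OmegaMat k μv Sm * M).trace ≤ ∫ ξ, gfun k ylow ξ ∂P := by
  haveI := hP.1
  have key : (OmegaMat k μv Sm * M).trace = ∫ ξ, (phi k ξ) ⬝ᵥ (M *ᵥ phi k ξ) ∂P := by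
    have e1 : (OmegaMat k μv Sm * M).trace = ∑ a, ∑ b, M a b * OmegaMat k μv Sm b a := by
      rw [trace_mul_eq]
      rw [Finset.sum_comm]
      exact Finset.sum_congr rfl fun a _ => Finset.sum_congr rfl fun b _ => mul_comm _ _
    rw [e1]
    have e2 : ∀ a b : Fin (k+1), M a b * OmegaMat k μv Sm b a
        = ∫ ξ, M a b * (phi k ξ a * phi k ξ b) ∂P := by
      intro a b
      rw [integral_const_mul]
      congr 1
      rw [← moment_entry hP b a]
      exact integral_congr_ae (Filter.Eventually.of_forall fun ξ => mul_comm _ _)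
    have e3 : ∀ a : Fin (k+1), (∑ b, M a b * OmegaMat k μv Sm b a)
        = ∫ ξ, ∑ b, M a b * (phi k ξ a * phi k ξ b) ∂P := by
      intro a
      rw [integral_finset_sum]
      · exact Finset.sum_congr rfl fun b _ => e2 a b
      · exact fun b _ => (integrable_phi_mul hP a b).const_mul _
    calc (∑ a, ∑ b, M a b * OmegaMat k μv Sm b a)
        = ∫ ξ, ∑ a, ∑ b, M a b * (phi k ξ a * phi k ξ b) ∂P := by
          rw [integral_finset_sum]
          · exact Finset.sum_congr rfl fun a _ => e3 a
          · exact fun a _ => integrable_finset_sum _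
              (fun b _ => (integrable_phi_mul hP a b).const_mul _)
      _ = ∫ ξ, (phi k ξ) ⬝ᵥ (M *ᵥ phi k ξ) ∂P :=
          integral_congr_ae (Filter.Eventually.of_forall fun ξ => (dot_eq_sum M (phi k ξ)).symm)
  rw [key]
  refine integral_mono ?_ (gfun_integrable hk hP.2.1) (feasible_dot_le_gfun hk hM)
  · have : (fun ξ => (phi k ξ) ⬝ᵥ (M *ᵥ phi k ξ))
        = fun ξ => ∑ a, ∑ b, M a b * (phi k ξ a * phi k ξ b) := by
      funext ξ; exact dot_eq_sum M (phi k ξ)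
    rw [this]
    exact integrable_finset_sum _ fun a _ => integrable_finset_sum _
      (fun b _ => (integrable_phi_mul hP a b).const_mul _)

end WD


section MC

variable {k : ℕ} {ylow : ℝ}

lemma dot_eq_sum' {n : ℕ} (N : Matrix (Fin n) (Fin n) ℝ) (x : Fin n → ℝ) :
    x ⬝ᵥ (N *ᵥ x) = ∑ a, ∑ b, N a b * (x a * x b) := by
  simp only [dotProduct, Matrix.mulVec, Finset.mul_sum]
  exact Finset.sum_congr rfl fun a _ => Finset.sum_congr rfl fun b _ => by ring

lemma integrable_dirac_sm {f : (Fin k → ℝ) → ℝ} (hf : StronglyMeasurable f)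
    (x : Fin k → ℝ) : Integrable f (Measure.dirac x) := by
  refine ⟨hf.aestronglyMeasurable, ?_⟩
  have h : (∫⁻ a, ‖f a‖ₑ ∂Measure.dirac x) = ‖f x‖ₑ := lintegral_dirac x _
  rw [HasFiniteIntegral, h]
  exact ENNReal.coe_lt_top

/-- Existence of a (discrete) probability measure with prescribed moment matrix. -/
lemma measure_from_moments (hk : 0 < k) {W : Matrix (Fin (k+1)) (Fin (k+1)) ℝ}
    (hW : W.PosSemidef) (hcorner : W (Fin.last k) (Fin.last k) = 1) :
    ∃ P : Measure (Fin k → ℝ), IsProbabilityMeasure P ∧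
      (∀ i, Integrable (fun ξ => ξ i) P) ∧
      (∀ i j, Integrable (fun ξ => ξ i * ξ j) P) ∧
      (∀ i, ∫ ξ, ξ i ∂P = W i.castSucc (Fin.last k)) ∧
      (∀ i j, ∫ ξ, ξ i * ξ j ∂P = W i.castSucc j.castSucc) := by
  have hkR : (0:ℝ) < k := by exact_mod_cast hk
  set m : Fin k → ℝ := fun i => W i.castSucc (Fin.last k) with hm
  have hWsym : ∀ a b, W a b = W b a := psd_symm_apply hW.1
  set R : Matrix (Fin k) (Fin k) ℝ :=
    Matrix.of (fun i j => W i.castSucc j.castSucc - m i * m j) with hRdef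
  have hR : R.PosSemidef := by
    refine Matrix.PosSemidef.of_dotProduct_mulVec_nonneg ?_ ?_
    · ext i j
      simp only [Matrix.conjTranspose_apply, hRdef, Matrix.of_apply, star_trivial]
      rw [hWsym j.castSucc i.castSucc]
      ring
    · intro x
      rw [star_trivial]
      set s : ℝ := ∑ i, m i * x i with hs
      set y : Fin (k+1) → ℝ := Fin.snoc x (-s) with hy
      have hyc : ∀ i : Fin k, y i.castSucc = x i := fun i => Fin.snoc_castSucc ..
      have hyl : y (Fin.last k) = -s := Fin.snoc_last ..
      have hWy := psd_dot hW y
      have e : y ⬝ᵥ (W *ᵥ y) =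
          (∑ i, ∑ j, W i.castSucc j.castSucc * (x i * x j)) - s * s := by
        rw [dot_eq_sum']
        rw [Fin.sum_univ_castSucc]
        have inner1 : ∀ i : Fin k, (∑ b : Fin (k+1), W i.castSucc b * (y i.castSucc * y b))
            = (∑ j, W i.castSucc j.castSucc * (x i * x j)) + m i * (x i * (-s)) := by
          intro i
          rw [Fin.sum_univ_castSucc]
          simp [hyc, hyl, hm]
        have inner2 : (∑ b : Fin (k+1), W (Fin.last k) b * (y (Fin.last k) * y b))
            = (∑ j, m j * ((-s) * x j)) + (-s) * (-s) := by
          rw [Fin.sum_univ_castSucc]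
          simp only [hyc, hyl, hcorner]
          congr 1
          · exact Finset.sum_congr rfl fun j _ => by rw [hWsym (Fin.last k) j.castSucc]
          · ring
        rw [Finset.sum_congr rfl fun i _ => inner1 i, inner2]
        rw [Finset.sum_add_distrib]
        have h1 : (∑ i, m i * (x i * (-s))) = -(s * s) := by
          have e1 : (∑ i, m i * (x i * (-s))) = (∑ i, m i * x i) * (-s) := by
            rw [Finset.sum_mul]
            exact Finset.sum_congr rfl fun i _ => by ring
          rw [e1, ← hs]; ring
        have h2 : (∑ j, m j * ((-s) * x j)) = -(s * s) := by
          have e1 : (∑ j, m j * ((-s) * x j)) = (∑ j, m j * x j) * (-s) := by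
            rw [Finset.sum_mul]
            exact Finset.sum_congr rfl fun i _ => by ring
          rw [e1, ← hs]; ring
        rw [h1, h2]
        ring
      have e2 : x ⬝ᵥ (R *ᵥ x) =
          (∑ i, ∑ j, W i.castSucc j.castSucc * (x i * x j)) - s * s := by
        rw [dot_eq_sum']
        have hss : s * s = ∑ i, ∑ j, (m i * x i) * (m j * x j) := by
          rw [hs]; exact Finset.sum_mul_sum _ _ _ _
        rw [hss, ← Finset.sum_sub_distrib]
        refine Finset.sum_congr rfl fun i _ => ?_
        rw [← Finset.sum_sub_distrib]
        refine Finset.sum_congr rfl fun j _ => ?_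
        simp only [hRdef, Matrix.of_apply]
        ring
      rw [e2]
      rw [e] at hWy
      linarith
  obtain ⟨A, hA, hAA⟩ : ∃ A : Matrix (Fin k) (Fin k) ℝ, A.PosSemidef ∧ A * A = R :=
    open scoped MatrixOrder in
      ⟨CFC.sqrt R, (CFC.sqrt_nonneg R).posSemidef, CFC.sqrt_mul_sqrt_self R hR.nonneg⟩
  have hAsym : ∀ i j, A i j = A j i := fun i j => psd_symm_apply hA.1 i j
  set sk := Real.sqrt k with hsk
  have hsk2 : sk * sk = k := Real.mul_self_sqrt hkR.le
  set xp : Fin k → (Fin k → ℝ) := fun j => fun i => m i + sk * A i j with hxp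
  set xm : Fin k → (Fin k → ℝ) := fun j => fun i => m i - sk * A i j with hxm
  set c : ℝ≥0∞ := ENNReal.ofReal (1/(2*k)) with hc
  set P : Measure (Fin k → ℝ) :=
    ∑ j, c • (Measure.dirac (xp j) + Measure.dirac (xm j)) with hP
  have hct : c.toReal = 1/(2*k) := ENNReal.toReal_ofReal (by positivity)
  have hcne : c ≠ ⊤ := ENNReal.ofReal_ne_top
  have hint : ∀ f : (Fin k → ℝ) → ℝ, StronglyMeasurable f → Integrable f P := by
    intro f hf
    rw [hP]
    refine integrable_finset_sum_measure.2 fun j _ => ?_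
    exact ((integrable_dirac_sm hf _).add_measure (integrable_dirac_sm hf _)).smul_measure hcne
  have hI : ∀ f : (Fin k → ℝ) → ℝ, StronglyMeasurable f →
      ∫ ξ, f ξ ∂P = ∑ j, (1/(2*k)) * (f (xp j) + f (xm j)) := by
    intro f hf
    rw [hP, integral_finset_sum_measure (fun j _ =>
      ((integrable_dirac_sm hf _).add_measure (integrable_dirac_sm hf _)).smul_measure hcne)]
    refine Finset.sum_congr rfl fun j _ => ?_
    rw [integral_smul_measure,
      integral_add_measure (integrable_dirac_sm hf _) (integrable_dirac_sm hf _),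
      integral_dirac' f _ hf, integral_dirac' f _ hf, hct]
    simp [smul_eq_mul]
  have hprob : IsProbabilityMeasure P := by
    constructor
    rw [hP]
    have : (∑ j, c • (Measure.dirac (xp j) + Measure.dirac (xm j)))
        (Set.univ : Set (Fin k → ℝ)) = ∑ j : Fin k, (c * 2) := by
      rw [Measure.finset_sum_apply]
      refine Finset.sum_congr rfl fun j _ => ?_
      rw [Measure.smul_apply, Measure.add_apply, measure_univ, measure_univ]
      simp [smul_eq_mul, one_add_one_eq_two]
    rw [this, Finset.sum_const, Finset.card_univ, Fintype.card_fin, nsmul_eq_mul]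
    rw [hc]
    have h2 : (ENNReal.ofReal (1/(2*(k:ℝ))) * 2) = ENNReal.ofReal (1/(k:ℝ)) := by
      rw [show (2:ℝ≥0∞) = ENNReal.ofReal (2:ℝ) by simp]
      rw [← ENNReal.ofReal_mul (by positivity)]
      congr 1
      field_simp
    rw [h2, show ((k:ℝ≥0∞)) = ENNReal.ofReal (k:ℝ) by simp,
      ← ENNReal.ofReal_mul (by positivity)]
    rw [mul_one_div, div_self hkR.ne']
    simp
  have smi : ∀ i : Fin k, StronglyMeasurable (fun ξ : Fin k → ℝ => ξ i) :=
    fun i => (measurable_pi_apply i).stronglyMeasurable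
  have smij : ∀ i j : Fin k, StronglyMeasurable (fun ξ : Fin k → ℝ => ξ i * ξ j) :=
    fun i j => ((measurable_pi_apply i).mul (measurable_pi_apply j)).stronglyMeasurable
  refine ⟨P, hprob, fun i => hint _ (smi i), fun i j => hint _ (smij i j), ?_, ?_⟩
  · intro i
    rw [hI _ (smi i)]
    have e : ∀ j : Fin k, (1/(2*(k:ℝ))) * (xp j i + xm j i) = (1/(k:ℝ)) * m i := by
      intro j
      rw [hxp, hxm]
      have hkne : (k:ℝ) ≠ 0 := hkR.ne'
      field_simp
      ring
    rw [Finset.sum_congr rfl fun j _ => e j, Finset.sum_const, Finset.card_univ,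
      Fintype.card_fin, nsmul_eq_mul]
    rw [hm]
    field_simp
  · intro i j
    rw [hI _ (smij i j)]
    have e : ∀ l : Fin k, (1/(2*(k:ℝ))) * (xp l i * xp l j + xm l i * xm l j)
        = (1/(k:ℝ)) * (m i * m j) + A i l * A j l := by
      intro l
      rw [hxp, hxm]
      have expand : (m i + sk * A i l) * (m j + sk * A j l)
          + (m i - sk * A i l) * (m j - sk * A j l)
          = 2 * (m i * m j) + 2 * ((sk * sk) * (A i l * A j l)) := by ring
      simp only []
      rw [expand, hsk2]
      have hkne : (k:ℝ) ≠ 0 := hkR.ne'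
      field_simp
    rw [Finset.sum_congr rfl fun l _ => e l, Finset.sum_add_distrib, Finset.sum_const,
      Finset.card_univ, Fintype.card_fin, nsmul_eq_mul]
    have hsumA : (∑ l, A i l * A j l) = R i j := by
      rw [← hAA, Matrix.mul_apply]
      exact Finset.sum_congr rfl fun l _ => by rw [hAsym j l]
    rw [hsumA]
    have : (k:ℝ) * ((1/(k:ℝ)) * (m i * m j)) = m i * m j := by field_simp
    rw [this, hRdef]
    simp only [Matrix.of_apply]
    rw [hm]
    ring

end MC

section Feas

variable {k : ℕ} {ylow : ℝ} {μv : Fin k → ℝ} {Sm : Matrix (Fin k) (Fin k) ℝ}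

lemma psd_sum {n : ℕ} {ι : Type*} {s : Finset ι} {f : ι → Matrix (Fin n) (Fin n) ℝ}
    (h : ∀ i ∈ s, (f i).PosSemidef) : (∑ i ∈ s, f i).PosSemidef := by
  classical
  induction s using Finset.induction_on with
  | empty => simpa using Matrix.PosSemidef.zero
  | insert a t hnotmem ih =>
    rw [Finset.sum_insert hnotmem]
    exact (h a (Finset.mem_insert_self a t)).add
      (ih fun i hi => h i (Finset.mem_insert_of_mem hi))

lemma cmat_hermitian (i : Fin (k+1)) : (Cmat k ylow i).IsHermitian := by
  induction i using Fin.cases with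
  | zero => rw [cmat_zero]; exact Matrix.isHermitian_zero
  | succ j =>
    rw [cmat_succ]
    ext a b
    simp only [Matrix.conjTranspose_apply, star_trivial, Matrix.add_apply, sing,
      Matrix.of_apply]
    by_cases h1 : a = j.castSucc <;> by_cases h2 : b = Fin.last k <;>
      by_cases h3 : b = j.castSucc <;> by_cases h4 : a = Fin.last k <;> simp_all

lemma feasible_M0 : PFeasible k ylow ((-(1 + |ylow|)) • (1 : Matrix (Fin (k+1)) (Fin (k+1)) ℝ)) := by
  constructor
  · unfold Matrix.IsSymm
    rw [Matrix.transpose_smul, Matrix.transpose_one]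
  · intro i
    refine Matrix.PosSemidef.of_dotProduct_mulVec_nonneg ?_ ?_
    · have h1 : ((-(1 + |ylow|)) • (1 : Matrix (Fin (k+1)) (Fin (k+1)) ℝ)).IsHermitian := by
        ext a b
        simp [Matrix.conjTranspose_apply, Matrix.one_apply, eq_comm]
      exact (cmat_hermitian i).sub h1
    · intro x
      rw [star_trivial, Matrix.sub_mulVec, dotProduct_sub]
      rw [Matrix.smul_mulVec, Matrix.one_mulVec, dotProduct_smul]
      have hxx : x ⬝ᵥ x = ∑ a, x a * x a := rfl
      have hxx0 : ∀ a : Fin (k+1), 0 ≤ x a * x a := fun a => mul_self_nonneg _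
      induction i using Fin.cases with
      | zero =>
        rw [dot_cmat_zero]
        simp only [smul_eq_mul, hxx]
        have : 0 ≤ ∑ a, x a * x a := Finset.sum_nonneg fun a _ => hxx0 a
        nlinarith [abs_nonneg ylow]
      | succ j =>
        rw [dot_cmat_succ]
        simp only [smul_eq_mul, hxx]
        have hpair : x j.castSucc * x j.castSucc + x (Fin.last k) * x (Fin.last k)
            ≤ ∑ a, x a * x a := by
          have hsub : ({j.castSucc, Fin.last k} : Finset (Fin (k+1))) ⊆ Finset.univ :=
            Finset.subset_univ _
          have := Finset.sum_le_sum_of_subset_of_nonneg hsub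
            (fun a _ _ => hxx0 a)
          rwa [Finset.sum_pair (Fin.castSucc_lt_last j).ne] at this
        nlinarith [abs_nonneg ylow, le_abs_self ylow, neg_abs_le ylow,
          mul_self_nonneg (x j.castSucc + x (Fin.last k)),
          mul_self_nonneg (x j.castSucc - x (Fin.last k))]

lemma omega_hermitian (hSsymm : Sm.IsSymm) : (OmegaMat k μv Sm).IsHermitian := by
  ext a b
  simp only [Matrix.conjTranspose_apply, star_trivial]
  induction a using Fin.lastCases with
  | last =>
    induction b using Fin.lastCases with
    | last => rfl
    | cast j => rw [omega_last_castSucc, omega_castSucc_last]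
  | cast i =>
    induction b using Fin.lastCases with
    | last => rw [omega_last_castSucc, omega_castSucc_last]
    | cast j =>
      rw [omega_castSucc_castSucc, omega_castSucc_castSucc, hSsymm.apply, mul_comm]

lemma omega_psd (hSsymm : Sm.IsSymm) (hSpsd : Sm.PosSemidef) :
    (OmegaMat k μv Sm).PosSemidef := by
  refine Matrix.PosSemidef.of_dotProduct_mulVec_nonneg ?_ ?_
  · exact omega_hermitian hSsymm
  · intro x
    rw [star_trivial, dot_eq_sum]
    set ξ : Fin k → ℝ := fun i => x i.castSucc with hξ
    set t : ℝ := x (Fin.last k) with ht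
    set s : ℝ := ∑ i, μv i * ξ i with hs
    have key : (∑ a, ∑ b, OmegaMat k μv Sm a b * (x a * x b))
        = ξ ⬝ᵥ (Sm *ᵥ ξ) + (s + t) * (s + t) := by
      rw [Fin.sum_univ_castSucc]
      have inner1 : ∀ i : Fin k, (∑ b : Fin (k+1), OmegaMat k μv Sm i.castSucc b
          * (x i.castSucc * x b))
          = (∑ j, (Sm i j + μv i * μv j) * (ξ i * ξ j)) + μv i * (ξ i * t) := by
        intro i
        rw [Fin.sum_univ_castSucc]
        congr 1
        · exact Finset.sum_congr rfl fun j _ => by rw [omega_castSucc_castSucc]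
        · rw [omega_castSucc_last]
      have inner2 : (∑ b : Fin (k+1), OmegaMat k μv Sm (Fin.last k) b
          * (x (Fin.last k) * x b))
          = (∑ j, μv j * (t * ξ j)) + 1 * (t * t) := by
        rw [Fin.sum_univ_castSucc]
        congr 1
        · exact Finset.sum_congr rfl fun j _ => by rw [omega_last_castSucc]
        · rw [omega_last_last]
      rw [Finset.sum_congr rfl fun i _ => inner1 i, inner2, Finset.sum_add_distrib]
      have e1 : (∑ i, ∑ j, (Sm i j + μv i * μv j) * (ξ i * ξ j))
          = ξ ⬝ᵥ (Sm *ᵥ ξ) + s * s := by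
        rw [dot_eq_sum']
        have hss : s * s = ∑ i, ∑ j, (μv i * ξ i) * (μv j * ξ j) := by
          rw [hs]; exact Finset.sum_mul_sum _ _ _ _
        rw [hss, ← Finset.sum_add_distrib]
        refine Finset.sum_congr rfl fun i _ => ?_
        rw [← Finset.sum_add_distrib]
        exact Finset.sum_congr rfl fun j _ => by ring
      have e2 : (∑ i, μv i * (ξ i * t)) = s * t := by
        rw [hs, Finset.sum_mul]
        exact Finset.sum_congr rfl fun i _ => by ring
      have e3 : (∑ j, μv j * (t * ξ j)) = s * t := by
        rw [hs, Finset.sum_mul]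
        exact Finset.sum_congr rfl fun i _ => by ring
      rw [e1, e2, e3]
      ring
    rw [key]
    have := psd_dot hSpsd ξ
    nlinarith [mul_self_nonneg (s + t)]

lemma momentset_nonempty (hk : 0 < k) (hSsymm : Sm.IsSymm) (hSpsd : Sm.PosSemidef) :
    ∃ P, P ∈ MomentSet k μv Sm := by
  obtain ⟨P, h1, h2, h3, h4, h5⟩ :=
    measure_from_moments hk (omega_psd hSsymm hSpsd) (omega_last_last (μv := μv) (Sm := Sm))
  refine ⟨P, h1, h2, h3, fun i => ?_, fun i j => ?_⟩
  · rw [h4 i, omega_castSucc_last]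
  · rw [h5 i j, omega_castSucc_castSucc]

end Feas

section Mix

variable {k : ℕ} {ylow : ℝ} {μv : Fin k → ℝ} {Sm : Matrix (Fin k) (Fin k) ℝ}

lemma trace_cmat_mul_zero_col {X : Matrix (Fin (k+1)) (Fin (k+1)) ℝ}
    (hcol : ∀ a, X a (Fin.last k) = 0) (hrow : ∀ a, X (Fin.last k) a = 0)
    (i : Fin (k+1)) : (Cmat k ylow i * X).trace = 0 := by
  induction i using Fin.cases with
  | zero => exact trace_cmat_zero_mul X
  | succ j => rw [trace_cmat_succ_mul, hcol, hrow, hrow]; ring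

lemma mixture (hk : 0 < k)
    {X : Fin (k+1) → Matrix (Fin (k+1)) (Fin (k+1)) ℝ}
    (hXpsd : ∀ i, (X i).PosSemidef)
    (hXsum : (∑ i, X i) = OmegaMat k μv Sm) :
    ∃ P ∈ MomentSet k μv Sm,
      ∫ ξ, gfun k ylow ξ ∂P ≤ ∑ i, (Cmat k ylow i * X i).trace := by
  classical
  set p : Fin (k+1) → ℝ := fun i => X i (Fin.last k) (Fin.last k) with hp
  have hp0 : ∀ i, 0 ≤ p i := fun i => psd_diag (hXpsd i) _
  have hXent : ∀ a b, (∑ i, X i a b) = OmegaMat k μv Sm a b := by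
    intro a b
    have h1 := congrFun (congrFun hXsum a) b
    rw [Matrix.sum_apply] at h1
    exact h1
  have hpsum : ∑ i, p i = 1 := by
    have := hXent (Fin.last k) (Fin.last k)
    rwa [omega_last_last] at this
  set Sa : Finset (Fin (k+1)) := Finset.univ.filter (fun i => p i ≠ 0) with hSa
  have hmem : ∀ i ∈ Sa, p i ≠ 0 := fun i hi => (Finset.mem_filter.1 hi).2
  have hmempos : ∀ i ∈ Sa, 0 < p i :=
    fun i hi => lt_of_le_of_ne (hp0 i) (Ne.symm (hmem i hi))
  set T : Matrix (Fin (k+1)) (Fin (k+1)) ℝ :=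
    ∑ i ∈ Finset.univ.filter (fun i => ¬ p i ≠ 0), X i with hT
  have hTpsd : T.PosSemidef := psd_sum fun i _ => hXpsd i
  have hXcol : ∀ i, p i = 0 → (∀ a, X i a (Fin.last k) = 0) :=
    fun i hi a => psd_entry_zero (hXpsd i) hi a
  have hXrow : ∀ i, p i = 0 → (∀ a, X i (Fin.last k) a = 0) := by
    intro i hi a
    rw [psd_symm_apply (hXpsd i).1]
    exact hXcol i hi a
  have hTcol : ∀ a, T a (Fin.last k) = 0 := by
    intro a
    rw [hT, Matrix.sum_apply]
    exact Finset.sum_eq_zero fun i hi =>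
      hXcol i (not_not.1 (Finset.mem_filter.1 hi).2) a
  have hTrow : ∀ a, T (Fin.last k) a = 0 := by
    intro a
    rw [hT, Matrix.sum_apply]
    exact Finset.sum_eq_zero fun i hi =>
      hXrow i (not_not.1 (Finset.mem_filter.1 hi).2) a
  have hione : ∃ i₀, p i₀ ≠ 0 := by
    by_contra h
    push_neg at h
    rw [Finset.sum_eq_zero (fun i _ => h i)] at hpsum
    norm_num at hpsum
  obtain ⟨i₀, hi₀⟩ := hione
  have hi₀Sa : i₀ ∈ Sa := by
    rw [hSa]; exact Finset.mem_filter.2 ⟨Finset.mem_univ _, hi₀⟩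
  set Y : Fin (k+1) → Matrix (Fin (k+1)) (Fin (k+1)) ℝ :=
    fun i => X i + (if i = i₀ then T else 0) with hY
  have hYpsd : ∀ i, (Y i).PosSemidef := by
    intro i
    rw [hY]
    by_cases h : i = i₀
    · simp only [h, if_pos rfl]
      exact (hXpsd i₀).add hTpsd
    · simp only [if_neg h, add_zero]
      exact hXpsd i
  have hYcorner : ∀ i, Y i (Fin.last k) (Fin.last k) = p i := by
    intro i
    rw [hY]
    by_cases h : i = i₀ <;> simp [h, Matrix.add_apply, hTcol, hp]
  have hYsum : ∀ a b, (∑ i ∈ Sa, Y i a b) = OmegaMat k μv Sm a b := by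
    intro a b
    have hYe : ∀ i, Y i a b = X i a b + (if i = i₀ then T a b else 0) := by
      intro i
      rw [hY]
      by_cases h : i = i₀ <;> simp [h]
    have e1 : (∑ i ∈ Sa, Y i a b) = (∑ i ∈ Sa, X i a b) + T a b := by
      rw [Finset.sum_congr rfl fun i _ => hYe i, Finset.sum_add_distrib,
        Finset.sum_ite_eq' Sa i₀ (fun _ => T a b), if_pos hi₀Sa]
    rw [e1, hT, Matrix.sum_apply, ← hXent a b, hSa]
    exact Finset.sum_filter_add_sum_filter_not _ _ _
  have hWprops : ∀ i, ∃ P : Measure (Fin k → ℝ), p i ≠ 0 →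
      (IsProbabilityMeasure P ∧ (∀ l, Integrable (fun ξ => ξ l) P) ∧
       (∀ l j, Integrable (fun ξ => ξ l * ξ j) P) ∧
       (∀ l, ∫ ξ, ξ l ∂P = (p i)⁻¹ * Y i l.castSucc (Fin.last k)) ∧
       (∀ l j, ∫ ξ, ξ l * ξ j ∂P = (p i)⁻¹ * Y i l.castSucc j.castSucc)) := by
    intro i
    by_cases h : p i = 0
    · exact ⟨Measure.dirac 0, fun hc => absurd h hc⟩
    · have hpi : 0 < p i := lt_of_le_of_ne (hp0 i) (Ne.symm h)
      have hWpsd : ((p i)⁻¹ • Y i).PosSemidef := psd_smul (hYpsd i) (inv_nonneg.2 hpi.le)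
      have hcor : ((p i)⁻¹ • Y i) (Fin.last k) (Fin.last k) = 1 := by
        rw [Matrix.smul_apply, hYcorner i, smul_eq_mul, inv_mul_cancel₀ h]
      obtain ⟨P, h1, h2, h3, h4, h5⟩ := measure_from_moments hk hWpsd hcor
      refine ⟨P, fun _ => ⟨h1, h2, h3, fun l => ?_, fun l j => ?_⟩⟩
      · rw [h4 l, Matrix.smul_apply, smul_eq_mul]
      · rw [h5 l j, Matrix.smul_apply, smul_eq_mul]
  choose Pm hPm using hWprops
  set P : Measure (Fin k → ℝ) := ∑ i ∈ Sa, ENNReal.ofReal (p i) • Pm i with hPdef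
  have hIInt : ∀ f : (Fin k → ℝ) → ℝ, (∀ i ∈ Sa, Integrable f (Pm i)) → Integrable f P := by
    intro f hf
    rw [hPdef]
    exact integrable_finset_sum_measure.2 fun i hi =>
      (hf i hi).smul_measure ENNReal.ofReal_ne_top
  have hIeval : ∀ f : (Fin k → ℝ) → ℝ, (∀ i ∈ Sa, Integrable f (Pm i)) →
      ∫ ξ, f ξ ∂P = ∑ i ∈ Sa, p i * ∫ ξ, f ξ ∂(Pm i) := by
    intro f hf
    rw [hPdef, integral_finset_sum_measure
      (fun i hi => (hf i hi).smul_measure ENNReal.ofReal_ne_top)]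
    refine Finset.sum_congr rfl fun i hi => ?_
    rw [integral_smul_measure, ENNReal.toReal_ofReal (hp0 i), smul_eq_mul]
  have hSapsum : ∑ i ∈ Sa, p i = 1 := by
    rw [← hpsum]
    rw [show (Finset.univ : Finset (Fin (k+1))) = Sa ∪ Finset.univ.filter (fun i => ¬ p i ≠ 0)
      from ?_]
    · rw [Finset.sum_union ?_]
      · have : ∑ i ∈ Finset.univ.filter (fun i => ¬ p i ≠ 0), p i = 0 :=
          Finset.sum_eq_zero fun i hi => not_not.1 (Finset.mem_filter.1 hi).2
        rw [this, add_zero]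
      · exact Finset.disjoint_filter_filter' _ _ (disjoint_compl_right)
    · rw [hSa, Finset.filter_union_filter_not_eq]
  have hprob : IsProbabilityMeasure P := by
    constructor
    rw [hPdef, Measure.finset_sum_apply]
    have e : ∀ i ∈ Sa, (ENNReal.ofReal (p i) • Pm i) Set.univ = ENNReal.ofReal (p i) := by
      intro i hi
      haveI := (hPm i (hmem i hi)).1
      rw [Measure.smul_apply, measure_univ, smul_eq_mul, mul_one]
    rw [Finset.sum_congr rfl e, ← ENNReal.ofReal_sum_of_nonneg (fun i _ => hp0 i), hSapsum]
    simp
  have hmom1 : ∀ l, ∫ ξ, ξ l ∂P = μv l := by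
    intro l
    rw [hIeval _ (fun i hi => (hPm i (hmem i hi)).2.1 l)]
    have e : ∀ i ∈ Sa, p i * ∫ ξ, ξ l ∂(Pm i) = Y i l.castSucc (Fin.last k) := by
      intro i hi
      rw [(hPm i (hmem i hi)).2.2.2.1 l, ← mul_assoc, mul_inv_cancel₀ (hmem i hi), one_mul]
    rw [Finset.sum_congr rfl e, hYsum, omega_castSucc_last]
  have hmom2 : ∀ l j, ∫ ξ, ξ l * ξ j ∂P = Sm l j + μv l * μv j := by
    intro l j
    rw [hIeval _ (fun i hi => (hPm i (hmem i hi)).2.2.1 l j)]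
    have e : ∀ i ∈ Sa, p i * ∫ ξ, ξ l * ξ j ∂(Pm i) = Y i l.castSucc j.castSucc := by
      intro i hi
      rw [(hPm i (hmem i hi)).2.2.2.2 l j, ← mul_assoc, mul_inv_cancel₀ (hmem i hi), one_mul]
    rw [Finset.sum_congr rfl e, hYsum, omega_castSucc_castSucc]
  have hmemP : P ∈ MomentSet k μv Sm :=
    ⟨hprob, fun l => hIInt _ (fun i hi => (hPm i (hmem i hi)).2.1 l),
      fun l j => hIInt _ (fun i hi => (hPm i (hmem i hi)).2.2.1 l j), hmom1, hmom2⟩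
  refine ⟨P, hmemP, ?_⟩
  have hgint : ∀ i ∈ Sa, Integrable (gfun k ylow) (Pm i) := by
    intro i hi
    haveI := (hPm i (hmem i hi)).1
    exact gfun_integrable hk (hPm i (hmem i hi)).2.1
  rw [hIeval _ hgint]
  have hbound : ∀ i ∈ Sa, p i * ∫ ξ, gfun k ylow ξ ∂(Pm i) ≤ (Cmat k ylow i * Y i).trace := by
    intro i hi
    haveI := (hPm i (hmem i hi)).1
    have hpi := hmempos i hi
    rcases Fin.eq_zero_or_eq_succ i with rfl | ⟨j, rfl⟩
    · rw [trace_cmat_zero_mul]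
      have hgneg : ∫ ξ, gfun k ylow ξ ∂(Pm 0) ≤ 0 :=
        integral_nonpos (fun ξ => gfun_le_zero ξ)
      have := mul_le_mul_of_nonneg_left hgneg (hp0 0)
      linarith
    · have h2 := (hPm j.succ (hmem _ hi)).2.1
      have h4 := (hPm j.succ (hmem _ hi)).2.2.2.1
      have hint1 : Integrable (fun ξ => ξ j - ylow) (Pm j.succ) :=
        (h2 j).sub (integrable_const _)
      have h6 : ∫ ξ, gfun k ylow ξ ∂(Pm j.succ) ≤ ∫ ξ, (ξ j - ylow) ∂(Pm j.succ) :=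
        integral_mono (gfun_integrable hk h2) hint1 (fun ξ => gfun_le j ξ)
      have h7 : ∫ ξ, (ξ j - ylow) ∂(Pm j.succ)
          = (p j.succ)⁻¹ * Y j.succ j.castSucc (Fin.last k) - ylow := by
        rw [integral_sub (h2 j) (integrable_const _), h4 j, integral_const]
        simp [measure_univ]
      rw [trace_cmat_succ_mul]
      have hYsymm : Y j.succ (Fin.last k) j.castSucc = Y j.succ j.castSucc (Fin.last k) :=
        psd_symm_apply (hYpsd j.succ).1 _ _
      rw [hYsymm, hYcorner]
      have h8 := mul_le_mul_of_nonneg_left (h6.trans (le_of_eq h7)) (hp0 j.succ)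
      rw [mul_sub, ← mul_assoc, mul_inv_cancel₀ (hmem _ hi), one_mul] at h8
      linarith
  refine le_trans (Finset.sum_le_sum hbound) (le_of_eq ?_)
  have e1 : ∀ i ∈ Sa, (Cmat k ylow i * Y i).trace = (Cmat k ylow i * X i).trace := by
    intro i hi
    by_cases h : i = i₀
    · have hYi : Y i = X i + T := by rw [hY]; simp [h]
      rw [hYi, Matrix.mul_add, Matrix.trace_add, trace_cmat_mul_zero_col hTcol hTrow, add_zero]
    · have hYi : Y i = X i := by rw [hY]; simp [h]
      rw [hYi]
  rw [Finset.sum_congr rfl e1]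
  have e2 : ∑ i ∈ Finset.univ.filter (fun i => ¬ p i ≠ 0), (Cmat k ylow i * X i).trace = 0 := by
    refine Finset.sum_eq_zero fun i hi => ?_
    have hpi0 : p i = 0 := not_not.1 (Finset.mem_filter.1 hi).2
    exact trace_cmat_mul_zero_col (hXcol i hpi0) (hXrow i hpi0) i
  have hsplit := Finset.sum_filter_add_sum_filter_not Finset.univ (fun i => p i ≠ 0)
    (fun i => (Cmat k ylow i * X i).trace)
  rw [e2, add_zero] at hsplit
  rw [hSa, hsplit]

end Mix

section SD

variable {k : ℕ} {ylow : ℝ}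

/-- The closed convex cone used in the separation argument. -/
def dualSet (k : ℕ) (ylow : ℝ) : Set (ℝ × (Fin (k+1) → Fin (k+1) → ℝ)) :=
  {q | ∃ X : Fin (k+1) → Matrix (Fin (k+1)) (Fin (k+1)) ℝ,
    (∀ i, (X i).PosSemidef) ∧ (∀ a b, q.2 a b = (∑ i, X i) a b) ∧
    (∑ i, (Cmat k ylow i * X i).trace) ≤ q.1}

lemma trace_cmat_combo (i : Fin (k+1)) (c d : ℝ)
    (U V : Matrix (Fin (k+1)) (Fin (k+1)) ℝ) :
    (Cmat k ylow i * (c • U + d • V)).trace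
      = c * (Cmat k ylow i * U).trace + d * (Cmat k ylow i * V).trace := by
  rw [Matrix.mul_add, Matrix.trace_add, Matrix.mul_smul, Matrix.mul_smul,
    Matrix.trace_smul, Matrix.trace_smul, smul_eq_mul, smul_eq_mul]

lemma dualSet_zero_mem : (0 : ℝ × (Fin (k+1) → Fin (k+1) → ℝ)) ∈ dualSet k ylow := by
  refine ⟨fun _ => 0, fun i => Matrix.PosSemidef.zero, fun a b => ?_, ?_⟩
  · simp [Matrix.sum_apply]
  · simp

lemma dualSet_ray_mem : ∀ v : ℝ, 0 ≤ v → ((v, 0) : ℝ × (Fin (k+1) → Fin (k+1) → ℝ)) ∈ dualSet k ylow := by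
  intro v hv
  refine ⟨fun _ => 0, fun i => Matrix.PosSemidef.zero, fun a b => ?_, ?_⟩
  · simp [Matrix.sum_apply]
  · simpa using hv

lemma dualSet_smul_mem {q : ℝ × (Fin (k+1) → Fin (k+1) → ℝ)} (hq : q ∈ dualSet k ylow)
    {c : ℝ} (hc : 0 ≤ c) : c • q ∈ dualSet k ylow := by
  obtain ⟨X, hpsd, hent, hval⟩ := hq
  refine ⟨fun i => c • X i, fun i => psd_smul (hpsd i) hc, fun a b => ?_, ?_⟩
  · have : (c • q).2 a b = c * q.2 a b := rfl
    rw [this, hent a b, Matrix.sum_apply, Matrix.sum_apply, Finset.mul_sum]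
    exact Finset.sum_congr rfl fun i _ => rfl
  · have e : ∀ i : Fin (k+1), (Cmat k ylow i * (c • X i)).trace
        = c * (Cmat k ylow i * X i).trace := by
      intro i
      rw [Matrix.mul_smul, Matrix.trace_smul, smul_eq_mul]
    rw [Finset.sum_congr rfl fun i _ => e i, ← Finset.mul_sum]
    have : (c • q).1 = c * q.1 := rfl
    rw [this]
    exact mul_le_mul_of_nonneg_left hval hc

lemma dualSet_convex : Convex ℝ (dualSet k ylow) := by
  intro q hq r hr c d hc hd hcd
  obtain ⟨Xq, hq1, hq2, hq3⟩ := hq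
  obtain ⟨Xr, hr1, hr2, hr3⟩ := hr
  refine ⟨fun i => c • Xq i + d • Xr i,
    fun i => (psd_smul (hq1 i) hc).add (psd_smul (hr1 i) hd), fun a b => ?_, ?_⟩
  · have : (c • q + d • r).2 a b = c * q.2 a b + d * r.2 a b := rfl
    rw [this, hq2 a b, hr2 a b, Matrix.sum_apply, Matrix.sum_apply, Matrix.sum_apply,
      Finset.mul_sum, Finset.mul_sum, ← Finset.sum_add_distrib]
    exact Finset.sum_congr rfl fun i _ => rfl
  · rw [Finset.sum_congr rfl fun i _ => trace_cmat_combo i c d (Xq i) (Xr i),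
      Finset.sum_add_distrib, ← Finset.mul_sum, ← Finset.mul_sum]
    have : (c • q + d • r).1 = c * q.1 + d * r.1 := rfl
    rw [this]
    exact add_le_add (mul_le_mul_of_nonneg_left hq3 hc) (mul_le_mul_of_nonneg_left hr3 hd)

lemma psd_two_form {n : ℕ} {X : Matrix (Fin n) (Fin n) ℝ} (hX : X.PosSemidef)
    {a b : Fin n} (hab : a ≠ b) (t : ℝ) :
    0 ≤ t * t * X a a + t * X a b + t * X b a + X b b := by
  have h := psd_dot hX (t • (Pi.single a 1 : Fin n → ℝ) + (Pi.single b 1 : Fin n → ℝ))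
  have e : X *ᵥ (t • (Pi.single a 1 : Fin n → ℝ) + (Pi.single b 1 : Fin n → ℝ)) =
      fun i => t * X i a + X i b := by
    funext i
    simp [Matrix.mulVec_add, Matrix.mulVec_smul, Matrix.mulVec_single, mul_comm]
  rw [e] at h
  have e2 : (t • (Pi.single a 1 : Fin n → ℝ) + (Pi.single b 1 : Fin n → ℝ)) ⬝ᵥ
      (fun i => t * X i a + X i b)
      = t * (t * X a a + X a b) + (t * X b a + X b b) := by
    simp [dotProduct, Pi.single_apply, ite_mul, zero_mul, add_mul,
      Finset.sum_add_distrib, Finset.sum_ite_eq', hab, Ne.symm hab]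
  rw [e2] at h
  nlinarith [h]

lemma psd_abs_entry {n : ℕ} {X : Matrix (Fin n) (Fin n) ℝ} (hX : X.PosSemidef)
    (a b : Fin n) : |X a b| ≤ X a a + X b b := by
  rcases eq_or_ne a b with rfl | hab
  · rw [abs_of_nonneg (psd_diag hX a)]
    linarith [psd_diag hX a]
  · have h1 := psd_two_form hX hab 1
    have h2 := psd_two_form hX hab (-1)
    have hsym : X b a = X a b := psd_symm_apply hX.1 b a
    rw [hsym] at h1 h2
    rw [abs_le]
    constructor <;> nlinarith [h1, h2, psd_diag hX a, psd_diag hX b]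

lemma dualSet_closed : IsClosed (dualSet k ylow) := by
  rw [← isSeqClosed_iff_isClosed]
  intro q ql hq hlim
  choose Xs hXpsd hXent hXval using hq
  have hconv2 : ∀ a b : Fin (k+1),
      Filter.Tendsto (fun n => (q n).2 a b) Filter.atTop (nhds (ql.2 a b)) := by
    intro a b
    have hcont : Continuous fun x : ℝ × (Fin (k+1) → Fin (k+1) → ℝ) => x.2 a b := by
      fun_prop
    exact (hcont.tendsto ql).comp hlim
  have hconv1 : Filter.Tendsto (fun n => (q n).1) Filter.atTop (nhds ql.1) :=
    (continuous_fst.tendsto ql).comp hlim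
  have hBex : ∀ a : Fin (k+1), ∃ B, ∀ n, (q n).2 a a ≤ B := by
    intro a
    obtain ⟨B, hB⟩ := (hconv2 a a).bddAbove_range
    exact ⟨B, fun n => hB (Set.mem_range_self n)⟩
  choose Bd hBd using hBex
  set B : ℝ := 2 * ∑ c, |Bd c| with hB
  have hdiag : ∀ n i a, Xs n i a a ≤ (q n).2 a a := by
    intro n i a
    have h1 : (q n).2 a a = ∑ j, Xs n j a a := by
      rw [hXent n a a, Matrix.sum_apply]
    rw [h1]
    exact Finset.single_le_sum (f := fun j => Xs n j a a)
      (fun j _ => psd_diag (hXpsd n j) a) (Finset.mem_univ i)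
  have hbound : ∀ n i a b, |Xs n i a b| ≤ B := by
    intro n i a b
    have h1 := psd_abs_entry (hXpsd n i) a b
    have h2 := (hdiag n i a).trans (hBd a n)
    have h3 := (hdiag n i b).trans (hBd b n)
    have h4 : Bd a ≤ ∑ c, |Bd c| :=
      le_trans (le_abs_self _)
        (Finset.single_le_sum (f := fun c => |Bd c|) (fun c _ => abs_nonneg _)
          (Finset.mem_univ a))
    have h5 : Bd b ≤ ∑ c, |Bd c| :=
      le_trans (le_abs_self _)
        (Finset.single_le_sum (f := fun c => |Bd c|) (fun c _ => abs_nonneg _)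
          (Finset.mem_univ b))
    rw [hB]
    linarith
  set K : Set (Fin (k+1) → Fin (k+1) → Fin (k+1) → ℝ) :=
    Set.univ.pi (fun _ => Set.univ.pi fun _ => Set.univ.pi fun _ => Set.Icc (-B) B) with hK
  have hKcomp : IsCompact K :=
    isCompact_univ_pi fun _ => isCompact_univ_pi fun _ => isCompact_univ_pi fun _ =>
      isCompact_Icc
  have hZK : ∀ n, (fun i a b => Xs n i a b) ∈ K := by
    intro n
    rw [hK]
    intro i _
    intro a _
    intro b _
    exact abs_le.1 (hbound n i a b)
  obtain ⟨L, _, ψ, hψ, hLtend⟩ := hKcomp.tendsto_subseq hZK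
  have hLt : ∀ i a b, Filter.Tendsto (fun n => Xs (ψ n) i a b) Filter.atTop (nhds (L i a b)) := by
    intro i a b
    have h1 := tendsto_pi_nhds.1 hLtend i
    have h2 := tendsto_pi_nhds.1 h1 a
    exact tendsto_pi_nhds.1 h2 b
  refine ⟨fun i => Matrix.of (L i), fun i => ?_, fun a b => ?_, ?_⟩
  · refine Matrix.PosSemidef.of_dotProduct_mulVec_nonneg ?_ ?_
    · ext a b
      simp only [Matrix.conjTranspose_apply, star_trivial, Matrix.of_apply]
      have h1 : (fun n => Xs (ψ n) i b a) = fun n => Xs (ψ n) i a b := by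
        funext n
        exact psd_symm_apply (hXpsd (ψ n) i).1 b a
      exact tendsto_nhds_unique (h1 ▸ hLt i b a) (hLt i a b)
    · intro x
      rw [star_trivial, dot_eq_sum']
      have htend : Filter.Tendsto
          (fun n => ∑ a, ∑ b, Xs (ψ n) i a b * (x a * x b)) Filter.atTop
          (nhds (∑ a, ∑ b, Matrix.of (L i) a b * (x a * x b))) := by
        refine tendsto_finset_sum _ fun a _ => tendsto_finset_sum _ fun b _ => ?_
        exact (hLt i a b).mul_const _
      refine ge_of_tendsto' htend fun n => ?_
      have := psd_dot (hXpsd (ψ n) i) x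
      rwa [dot_eq_sum'] at this
  · rw [Matrix.sum_apply]
    have h1 : Filter.Tendsto (fun n => (q (ψ n)).2 a b) Filter.atTop (nhds (ql.2 a b)) :=
      (hconv2 a b).comp hψ.tendsto_atTop
    have h2 : Filter.Tendsto (fun n => (q (ψ n)).2 a b) Filter.atTop
        (nhds (∑ i, Matrix.of (L i) a b)) := by
      have e : (fun n => (q (ψ n)).2 a b) = fun n => ∑ i, Xs (ψ n) i a b := by
        funext n
        rw [hXent (ψ n) a b, Matrix.sum_apply]
      rw [e]
      exact tendsto_finset_sum _ fun i _ => hLt i a b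
    exact tendsto_nhds_unique h1 h2
  · have h1 : Filter.Tendsto (fun n => ∑ i, (Cmat k ylow i * Xs (ψ n) i).trace)
        Filter.atTop (nhds (∑ i, (Cmat k ylow i * Matrix.of (L i)).trace)) := by
      refine tendsto_finset_sum _ fun i _ => ?_
      have e : ∀ n, (Cmat k ylow i * Xs (ψ n) i).trace
          = ∑ a, ∑ b, Cmat k ylow i a b * Xs (ψ n) i b a := fun n => trace_mul_eq _ _
      have e2 : (Cmat k ylow i * Matrix.of (L i)).trace
          = ∑ a, ∑ b, Cmat k ylow i a b * Matrix.of (L i) b a := trace_mul_eq _ _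
      rw [e2, funext e]
      refine tendsto_finset_sum _ fun a _ => tendsto_finset_sum _ fun b _ => ?_
      exact (hLt i b a).const_mul _
    have h2 : Filter.Tendsto (fun n => (q (ψ n)).1) Filter.atTop (nhds ql.1) :=
      hconv1.comp hψ.tendsto_atTop
    exact le_of_tendsto_of_tendsto' h1 h2 fun n => hXval (ψ n)

end SD

section SD2

variable {k : ℕ} {ylow : ℝ} {μv : Fin k → ℝ} {Sm : Matrix (Fin k) (Fin k) ℝ}

lemma pi_decomp (Z : Fin (k+1) → Fin (k+1) → ℝ) :
    Z = ∑ a, ∑ b, Z a b • (Pi.single a (Pi.single b (1:ℝ)) : Fin (k+1) → Fin (k+1) → ℝ) := by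
  funext a' b'
  symm
  simp only [Finset.sum_apply]
  have e : ∀ a b : Fin (k+1),
      (Z a b • (Pi.single a (Pi.single b (1:ℝ)) : Fin (k+1) → Fin (k+1) → ℝ)) a' b'
        = if a' = a then (if b' = b then Z a b else 0) else 0 := by
    intro a b
    by_cases h1 : a' = a <;> by_cases h2 : b' = b <;> simp [Pi.single_apply, h1, h2]
  rw [Finset.sum_congr rfl fun a _ => Finset.sum_congr rfl fun b _ => e a b]
  have e2 : ∀ a : Fin (k+1), (∑ b, if a' = a then (if b' = b then Z a b else 0) else 0)
      = if a' = a then Z a b' else 0 := by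
    intro a
    by_cases h1 : a' = a
    · simp only [h1, if_true]
      rw [Finset.sum_ite_eq Finset.univ b' (fun b => Z a b)]
      simp
    · simp [h1]
  rw [Finset.sum_congr rfl fun a _ => e2 a, Finset.sum_ite_eq Finset.univ a' (fun a => Z a b')]
  simp

lemma clm_decomp (f : (ℝ × (Fin (k+1) → Fin (k+1) → ℝ)) →L[ℝ] ℝ)
    (v : ℝ × (Fin (k+1) → Fin (k+1) → ℝ)) :
    f v = v.1 * f (1, 0) +
      ∑ a, ∑ b, v.2 a b * f (0, Pi.single a (Pi.single b 1)) := by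
  have hsplit : v = (v.1, (0 : Fin (k+1) → Fin (k+1) → ℝ)) + ((0:ℝ), v.2) := by
    ext <;> simp
  have h1 : f (v.1, (0 : Fin (k+1) → Fin (k+1) → ℝ)) = v.1 * f (1, 0) := by
    have e : (v.1, (0 : Fin (k+1) → Fin (k+1) → ℝ)) = v.1 • ((1:ℝ), (0 : Fin (k+1) → Fin (k+1) → ℝ)) := by
      ext <;> simp
    rw [e, f.map_smul, smul_eq_mul]
  have h2 : f ((0:ℝ), v.2) = ∑ a, ∑ b, v.2 a b * f (0, Pi.single a (Pi.single b 1)) := by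
    set g : (Fin (k+1) → Fin (k+1) → ℝ) →L[ℝ] ℝ :=
      f.comp (ContinuousLinearMap.inr ℝ ℝ (Fin (k+1) → Fin (k+1) → ℝ)) with hg
    have hgapp : ∀ z, g z = f (0, z) := fun z => rfl
    rw [← hgapp]
    conv_lhs => rw [pi_decomp v.2]
    rw [map_sum]
    refine Finset.sum_congr rfl fun a _ => ?_
    rw [map_sum]
    refine Finset.sum_congr rfl fun b _ => ?_
    rw [g.map_smul, smul_eq_mul, hgapp]
  conv_lhs => rw [hsplit]
  rw [map_add, h1, h2]

lemma trace_mul_outer (N : Matrix (Fin (k+1)) (Fin (k+1)) ℝ) (x : Fin (k+1) → ℝ) :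
    (N * Matrix.of (fun a b => x a * x b)).trace = x ⬝ᵥ (N *ᵥ x) := by
  rw [trace_mul_eq, dot_eq_sum]
  exact Finset.sum_congr rfl fun a _ => Finset.sum_congr rfl fun b _ => by
    simp only [Matrix.of_apply]; ring

lemma strong_duality (hk : 0 < k) (hSsymm : Sm.IsSymm) (hSpsd : Sm.PosSemidef)
    {ε : ℝ} (hε : 0 < ε) :
    ∃ X : Fin (k+1) → Matrix (Fin (k+1)) (Fin (k+1)) ℝ,
      (∀ i, (X i).PosSemidef) ∧ (∑ i, X i) = OmegaMat k μv Sm ∧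
      (∑ i, (Cmat k ylow i * X i).trace) ≤ pval k ylow (OmegaMat k μv Sm) + ε := by
  classical
  set Ω := OmegaMat k μv Sm with hΩdef
  set S2 := {t : ℝ | ∃ M, PFeasible k ylow M ∧ t = (Ω * M).trace} with hS2
  have hpval : pval k ylow Ω = sSup S2 := rfl
  obtain ⟨P₀, hP₀⟩ := momentset_nonempty hk hSsymm hSpsd
  have hbdd : BddAbove S2 := by
    refine ⟨∫ ξ, gfun k ylow ξ ∂P₀, fun t ht => ?_⟩
    obtain ⟨M, hM, rfl⟩ := ht
    exact weak_duality hk hP₀ hM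
  by_cases hxA : ((pval k ylow Ω + ε, fun a b => Ω a b) : ℝ × (Fin (k+1) → Fin (k+1) → ℝ))
      ∈ dualSet k ylow
  · obtain ⟨X, h1, h2, h3⟩ := hxA
    refine ⟨X, h1, ?_, h3⟩
    ext a b
    exact (h2 a b).symm
  · exfalso
    obtain ⟨f, u, hfx, hfA⟩ :=
      geometric_hahn_banach_point_closed dualSet_convex dualSet_closed hxA
    have hu0 : u < 0 := by
      have := hfA 0 dualSet_zero_mem
      rwa [map_zero] at this
    have hf_nonneg : ∀ z ∈ dualSet k ylow, 0 ≤ f z := by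
      intro z hz
      by_contra hneg
      push_neg at hneg
      have hc : 0 ≤ u / f z := (div_pos_of_neg_of_neg hu0 hneg).le
      have := hfA _ (dualSet_smul_mem hz hc)
      rw [f.map_smul, smul_eq_mul, div_mul_cancel₀ _ (ne_of_lt hneg)] at this
      exact lt_irrefl u this
    set α := f (1, 0) with hα
    set Yf : Fin (k+1) → Fin (k+1) → ℝ :=
      fun a b => f (0, Pi.single a (Pi.single b 1)) with hYf
    have hdec : ∀ v : ℝ × (Fin (k+1) → Fin (k+1) → ℝ),
        f v = v.1 * α + ∑ a, ∑ b, v.2 a b * Yf a b := fun v => clm_decomp f v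
    have hαnn : 0 ≤ α := hf_nonneg _ (dualSet_ray_mem 1 zero_le_one)
    have hsingle : ∀ (V : Matrix (Fin (k+1)) (Fin (k+1)) ℝ), V.PosSemidef →
        ∀ i : Fin (k+1),
        0 ≤ (Cmat k ylow i * V).trace * α + ∑ a, ∑ b, V a b * Yf a b := by
      intro V hV i
      have hmem : (((Cmat k ylow i * V).trace, fun a b => V a b) :
          ℝ × (Fin (k+1) → Fin (k+1) → ℝ)) ∈ dualSet k ylow := by
        refine ⟨fun j => if j = i then V else 0, fun j => ?_, fun a b => ?_, ?_⟩
        · by_cases h : j = i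
          · simpa [h] using hV
          · simpa [h] using Matrix.PosSemidef.zero
        · rw [Matrix.sum_apply]
          have e : ∀ j : Fin (k+1), (if j = i then V else 0) a b
              = (if j = i then V a b else 0) := by
            intro j; by_cases h : j = i <;> simp [h]
          rw [Finset.sum_congr rfl fun j _ => e j,
            Finset.sum_ite_eq' Finset.univ i fun _ => V a b]
          simp
        · have e : ∀ j : Fin (k+1), (Cmat k ylow j * (if j = i then V else 0)).trace
              = (if j = i then (Cmat k ylow j * V).trace else 0) := by
            intro j; by_cases h : j = i <;> simp [h]
          rw [Finset.sum_congr rfl fun j _ => e j,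
            Finset.sum_ite_eq' Finset.univ i fun j => (Cmat k ylow j * V).trace]
          simp
      have h := hf_nonneg _ hmem
      rw [hdec] at h
      simpa using h
    have hx0 : (pval k ylow Ω + ε) * α + ∑ a, ∑ b, Ω a b * Yf a b < 0 := by
      have h1 := hfx
      rw [hdec] at h1
      simp only [] at h1
      exact lt_trans h1 hu0
    rcases eq_or_lt_of_le hαnn with hα0 | hαpos
    · have h1 := hsingle Ω (omega_psd hSsymm hSpsd) 0
      rw [← hα0, mul_zero, zero_add] at h1
      rw [← hα0, mul_zero, zero_add] at hx0
      linarith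
    · set Ysym : Matrix (Fin (k+1)) (Fin (k+1)) ℝ :=
        Matrix.of (fun a b => (Yf a b + Yf b a) / 2) with hYs
      set M : Matrix (Fin (k+1)) (Fin (k+1)) ℝ := (-(α⁻¹)) • Ysym with hM
      have hd1 : ∀ (g : Fin (k+1) → Fin (k+1) → ℝ),
          (∑ a, ∑ b, g a b / 2) = (∑ a, ∑ b, g a b) / 2 := by
        intro g
        rw [Finset.sum_div]
        exact Finset.sum_congr rfl fun a _ => by rw [Finset.sum_div]
      have hswap : ∀ x : Fin (k+1) → ℝ,
          (∑ a, ∑ b, Yf b a * (x a * x b)) = ∑ a, ∑ b, Yf a b * (x a * x b) := by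
        intro x
        rw [Finset.sum_comm]
        exact Finset.sum_congr rfl fun a _ => Finset.sum_congr rfl fun b _ => by ring
      have hYsq : ∀ x : Fin (k+1) → ℝ,
          x ⬝ᵥ (Ysym *ᵥ x) = ∑ a, ∑ b, Yf a b * (x a * x b) := by
        intro x
        rw [dot_eq_sum]
        have e1 : ∀ a b : Fin (k+1), Ysym a b * (x a * x b)
            = Yf a b * (x a * x b) / 2 + Yf b a * (x a * x b) / 2 := by
          intro a b
          simp only [hYs, Matrix.of_apply]
          ring
        rw [Finset.sum_congr rfl fun a _ => Finset.sum_congr rfl fun b _ => e1 a b]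
        rw [Finset.sum_congr rfl
          fun a (_ : a ∈ Finset.univ) => Finset.sum_add_distrib, Finset.sum_add_distrib]
        rw [hd1 (fun a b => Yf a b * (x a * x b)), hd1 (fun a b => Yf b a * (x a * x b)),
          hswap x]
        ring
      have hMherm : M.IsHermitian := by
        ext a b
        simp only [hM, Matrix.smul_apply, Matrix.conjTranspose_apply, star_trivial, hYs,
          Matrix.of_apply, smul_eq_mul]
        ring
      have hMfeas : PFeasible k ylow M := by
        constructor
        · unfold Matrix.IsSymm
          ext a b
          simp only [hM, Matrix.transpose_apply, Matrix.smul_apply, hYs, Matrix.of_apply,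
            smul_eq_mul]
          ring
        · intro i
          refine Matrix.PosSemidef.of_dotProduct_mulVec_nonneg ?_ ?_
          · exact (cmat_hermitian i).sub hMherm
          · intro x
            rw [star_trivial, Matrix.sub_mulVec, dotProduct_sub]
            have hMx : M *ᵥ x = (-(α⁻¹)) • (Ysym *ᵥ x) := by
              rw [hM, Matrix.smul_mulVec]
            rw [hMx, dotProduct_smul, smul_eq_mul, hYsq x]
            have h1 := hsingle (Matrix.of fun a b => x a * x b) (posSemidef_outer x) i
            rw [trace_mul_outer] at h1
            have h3 : (∑ a, ∑ b, (Matrix.of fun a b => x a * x b) a b * Yf a b)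
                = ∑ a, ∑ b, Yf a b * (x a * x b) := by
              refine Finset.sum_congr rfl fun a _ => Finset.sum_congr rfl fun b _ => ?_
              simp only [Matrix.of_apply]
              ring
            rw [h3] at h1
            have h4 := mul_nonneg (inv_nonneg.2 hαpos.le) h1
            rw [mul_add] at h4
            have h5 : α⁻¹ * ((x ⬝ᵥ (Cmat k ylow i *ᵥ x)) * α) = x ⬝ᵥ (Cmat k ylow i *ᵥ x) := by
              field_simp
            rw [h5] at h4
            have h10 : -(α⁻¹) * (∑ a, ∑ b, Yf a b * (x a * x b))
                = -(α⁻¹ * (∑ a, ∑ b, Yf a b * (x a * x b))) := by ring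
            linarith [h4, h10.le, h10.ge]
      have hvle : (Ω * M).trace ≤ pval k ylow Ω := by
        rw [hpval]
        exact le_csSup hbdd ⟨M, hMfeas, rfl⟩
      have hΩsym : ∀ a b, Ω a b = Ω b a := psd_symm_apply (omega_psd hSsymm hSpsd).1
      have htr : (Ω * M).trace = -(α⁻¹) * (∑ a, ∑ b, Ω a b * Yf a b) := by
        rw [hM, Matrix.mul_smul, Matrix.trace_smul, smul_eq_mul]
        congr 1
        rw [trace_mul_eq]
        have e1 : ∀ a b : Fin (k+1), Ω a b * Ysym b a
            = Ω a b * Yf b a / 2 + Ω a b * Yf a b / 2 := by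
          intro a b
          simp only [hYs, Matrix.of_apply]
          ring
        rw [Finset.sum_congr rfl fun a _ => Finset.sum_congr rfl fun b _ => e1 a b]
        rw [Finset.sum_congr rfl
          fun a (_ : a ∈ Finset.univ) => Finset.sum_add_distrib, Finset.sum_add_distrib]
        rw [hd1 (fun a b => Ω a b * Yf b a), hd1 (fun a b => Ω a b * Yf a b)]
        have hsw2 : (∑ a, ∑ b, Ω a b * Yf b a) = ∑ a, ∑ b, Ω a b * Yf a b := by
          rw [Finset.sum_comm]
          refine Finset.sum_congr rfl fun a _ => Finset.sum_congr rfl fun b _ => ?_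
          rw [hΩsym b a]
        rw [hsw2]
        ring
      have h8 : α⁻¹ * ((pval k ylow Ω + ε) * α) + α⁻¹ * (∑ a, ∑ b, Ω a b * Yf a b) < 0 := by
        have := mul_neg_of_pos_of_neg (inv_pos.2 hαpos) hx0
        rwa [mul_add] at this
      have h9 : α⁻¹ * ((pval k ylow Ω + ε) * α) = pval k ylow Ω + ε := by
        field_simp
      rw [htr] at hvle
      have h10 : -(α⁻¹) * (∑ a, ∑ b, Ω a b * Yf a b)
          = -(α⁻¹ * (∑ a, ∑ b, Ω a b * Yf a b)) := by ring
      linarith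

end SD2

end SDP

/-- **Theorem 1 of the paper.** For `Σ ≻ 0` the infimum of `∫ g dP` over all probability
measures `P ∈ 𝒫(μ,Σ)` equals `p(Ω(μ,Σ))`, the optimal value of the SDP (P). -/
theorem inf_expectation_eq_pval (k : ℕ) (hk : 1 ≤ k) (ylow : ℝ)
    (μv : Fin k → ℝ) (Sm : Matrix (Fin k) (Fin k) ℝ)
    (hSsymm : Sm.IsSymm) (hS : Sm.PosDef) :
    sInf {t : ℝ | ∃ P ∈ MomentSet k μv Sm, t = ∫ ξ, gfun k ylow ξ ∂P} =
      pval k ylow (OmegaMat k μv Sm) := by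
  have hk0 : 0 < k := hk
  set S1 := {t : ℝ | ∃ P ∈ MomentSet k μv Sm, t = ∫ ξ, gfun k ylow ξ ∂P} with hS1
  set S2 := {t : ℝ | ∃ M, PFeasible k ylow M ∧ t = (OmegaMat k μv Sm * M).trace} with hS2
  have hpval : pval k ylow (OmegaMat k μv Sm) = sSup S2 := rfl
  obtain ⟨P₀, hP₀⟩ := SDP.momentset_nonempty hk0 hSsymm hS.posSemidef
  have hS1ne : S1.Nonempty := ⟨_, P₀, hP₀, rfl⟩
  have hS2ne : S2.Nonempty := ⟨_, _, SDP.feasible_M0, rfl⟩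
  have hle : ∀ t ∈ S2, ∀ s ∈ S1, t ≤ s := by
    rintro t ⟨M, hM, rfl⟩ s ⟨P, hP, rfl⟩
    exact SDP.weak_duality hk0 hP hM
  have ht₀ : (OmegaMat k μv Sm * ((-(1 + |ylow|)) • 1)).trace ∈ S2 :=
    ⟨_, SDP.feasible_M0, rfl⟩
  have hbddS1 : BddBelow S1 := ⟨_, fun s hs => hle _ ht₀ s hs⟩
  refine le_antisymm ?_ ?_
  · rw [hpval]
    refine le_of_forall_pos_le_add ?_
    intro ε hε
    obtain ⟨X, hXpsd, hXsum, hXval⟩ := SDP.strong_duality hk0 hSsymm hS.posSemidef hε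
    obtain ⟨P, hPmem, hPle⟩ := SDP.mixture hk0 hXpsd hXsum
    rw [← hpval]
    exact (csInf_le hbddS1 ⟨P, hPmem, rfl⟩).trans (hPle.trans hXval)
  · rw [hpval]
    exact csSup_le hS2ne fun t ht => le_csInf hS1ne fun s hs => hle t ht s hs
end

section
/- Let k ≥ 1, μ ∈ ℝ^k, and let Σ be a real symmetric k×k matrix. For every probability measure P ∈ 𝒫(μ,Σ) and every symmetric matrix M that is feasible for the primal SDP (P), one has trace(Ω(μ,Σ) M) ≤ ∫ g dP. (Weak duality between the SDP (P) and the moment problem, underlying the lower-bound property of the OEI acquisition function.) -/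
open Matrix MeasureTheory

section helpers

open Finset

lemma snoc_dot (k : ℕ) (ylow : ℝ) (M : Matrix (Fin (k + 1)) (Fin (k + 1)) ℝ)
    (hM : PFeasible k ylow M) (ξ : Fin k → ℝ) (i : Fin (k + 1)) :
    (∑ a, ∑ b, (Fin.snoc ξ 1 : Fin (k+1) → ℝ) a * (Fin.snoc ξ 1 : Fin (k+1) → ℝ) b * M b a)
      ≤ (Fin.snoc ξ 1 : Fin (k+1) → ℝ) ⬝ᵥ (Cmat k ylow i *ᵥ (Fin.snoc ξ 1 : Fin (k+1) → ℝ)) := by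
  set x : Fin (k+1) → ℝ := Fin.snoc ξ 1 with hx
  have hS : (∑ a, ∑ b, x a * x b * M b a) = x ⬝ᵥ (M *ᵥ x) := by
    simp only [dotProduct, mulVec, Finset.mul_sum]
    refine Finset.sum_congr rfl fun a _ => Finset.sum_congr rfl fun b _ => ?_
    rw [(hM.1.apply a b).symm]
    ring
  have hpsd := (hM.2 i).dotProduct_mulVec_nonneg x
  have hexp : star x ⬝ᵥ ((Cmat k ylow i - M) *ᵥ x)
      = x ⬝ᵥ (Cmat k ylow i *ᵥ x) - x ⬝ᵥ (M *ᵥ x) := by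
    simp [Matrix.sub_mulVec, dotProduct_sub]
  rw [hexp] at hpsd
  linarith [hS ▸ hpsd]

lemma cdot_zero (k : ℕ) (ylow : ℝ) (x : Fin (k+1) → ℝ) :
    x ⬝ᵥ (Cmat k ylow 0 *ᵥ x) = 0 := by
  have : Cmat k ylow 0 = 0 := rfl
  simp [this]

lemma cdot_succ (k : ℕ) (ylow : ℝ) (ξ : Fin k → ℝ) (i : Fin k) :
    (Fin.snoc ξ 1 : Fin (k+1) → ℝ) ⬝ᵥ
      (Cmat k ylow i.succ *ᵥ (Fin.snoc ξ 1 : Fin (k+1) → ℝ)) = ξ i - ylow := by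
  have hC : Cmat k ylow i.succ = Matrix.of fun a b =>
      if a = Fin.last k ∧ b = Fin.last k then -ylow
      else if a = i.castSucc ∧ b = Fin.last k then 1 / 2
      else if a = Fin.last k ∧ b = i.castSucc then 1 / 2
      else 0 := by
    simp [Cmat]
  rw [hC]
  simp only [dotProduct, mulVec]
  rw [Fin.sum_univ_castSucc]
  have hlast : ∀ j : Fin k, (Fin.castSucc j : Fin (k+1)) ≠ Fin.last k :=
    fun j => Fin.ne_of_lt (Fin.castSucc_lt_last j)
  have h1 : ∀ j : Fin k,
      (Fin.snoc ξ 1 : Fin (k+1) → ℝ) (Fin.castSucc j) *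
        (∑ b, (Matrix.of fun a b =>
      if a = Fin.last k ∧ b = Fin.last k then -ylow
      else if a = i.castSucc ∧ b = Fin.last k then 1 / 2
      else if a = Fin.last k ∧ b = i.castSucc then 1 / 2
      else 0 : Matrix (Fin (k+1)) (Fin (k+1)) ℝ) (Fin.castSucc j) b *
        (Fin.snoc ξ 1 : Fin (k+1) → ℝ) b)
      = if j = i then ξ i * (1/2) else 0 := by
    intro j
    rw [Fin.sum_univ_castSucc]
    by_cases hji : j = i
    · subst hji
      simp [hlast, Fin.castSucc_inj, Fin.snoc_castSucc, Fin.snoc_last]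
    · simp [hlast, Fin.castSucc_inj, hji, Fin.snoc_castSucc]
  rw [Finset.sum_congr rfl fun j _ => h1 j]
  rw [Fin.sum_univ_castSucc]
  simp [hlast, (fun j : Fin k => (hlast j).symm), Fin.snoc_castSucc, Fin.snoc_last,
    Finset.sum_ite_eq']
  ring

end helpers

/-- **Weak duality** between the SDP (P) and the moment problem: for every
`P ∈ 𝒫(μ,Σ)` and every feasible `M`, `⟨Ω(μ,Σ), M⟩ ≤ ∫ g dP`. -/
theorem weak_duality (k : ℕ) (hk : 1 ≤ k) (ylow : ℝ)
    (μv : Fin k → ℝ) (Sm : Matrix (Fin k) (Fin k) ℝ) (hSsymm : Sm.IsSymm)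
    (P : Measure (Fin k → ℝ)) (hP : P ∈ MomentSet k μv Sm)
    (M : Matrix (Fin (k + 1)) (Fin (k + 1)) ℝ) (hM : PFeasible k ylow M) :
    (OmegaMat k μv Sm * M).trace ≤ ∫ ξ, gfun k ylow ξ ∂P := by
  obtain ⟨hprob, hInt1, hInt2, hMean, hSec⟩ := hP
  haveI := hprob
  haveI : Nonempty (Fin k) := ⟨⟨0, hk⟩⟩
  set x : (Fin k → ℝ) → Fin (k+1) → ℝ := fun ξ => Fin.snoc ξ 1 with hxdef
  set F : Fin (k+1) → Fin (k+1) → (Fin k → ℝ) → ℝ :=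
    fun a b ξ => x ξ a * x ξ b * M b a with hFdef
  -- integrability of each F a b
  have hIntF : ∀ a b, Integrable (F a b) P := by
    intro a b
    refine Fin.lastCases ?_ (fun i => ?_) a
    · refine Fin.lastCases ?_ (fun j => ?_) b
      · simpa [hFdef, hxdef] using
          (integrable_const (1 * 1 * M (Fin.last k) (Fin.last k)) : Integrable _ P)
      · simpa [hFdef, hxdef, mul_comm] using (hInt1 j).mul_const (M (Fin.castSucc j) (Fin.last k))
    · refine Fin.lastCases ?_ (fun j => ?_) b
      · simpa [hFdef, hxdef] using (hInt1 i).mul_const (M (Fin.last k) (Fin.castSucc i))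
      · simpa [hFdef, hxdef] using (hInt2 i j).mul_const (M (Fin.castSucc j) (Fin.castSucc i))
  -- integral of F a b equals Ω a b * M b a
  have hIntEq : ∀ a b, ∫ ξ, F a b ξ ∂P = OmegaMat k μv Sm a b * M b a := by
    intro a b
    refine Fin.lastCases ?_ (fun i => ?_) a <;> refine Fin.lastCases ?_ (fun j => ?_) b
    · simp [hFdef, hxdef, OmegaMat]
    · simp only [hFdef, hxdef, Fin.snoc_last, Fin.snoc_castSucc, one_mul]
      rw [integral_mul_const, hMean]
      simp [OmegaMat]
    · simp only [hFdef, hxdef, Fin.snoc_last, Fin.snoc_castSucc, mul_one]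
      rw [integral_mul_const, hMean]
      simp [OmegaMat]
    · simp only [hFdef, hxdef, Fin.snoc_castSucc]
      rw [integral_mul_const, hSec]
      simp [OmegaMat]
  -- trace as sum of integrals
  have htr : (OmegaMat k μv Sm * M).trace = ∑ a, ∑ b, ∫ ξ, F a b ξ ∂P := by
    simp only [Matrix.trace, Matrix.diag, Matrix.mul_apply, hIntEq]
  have hswap : (OmegaMat k μv Sm * M).trace = ∫ ξ, ∑ a, ∑ b, F a b ξ ∂P := by
    rw [htr]
    calc (∑ a, ∑ b, ∫ ξ, F a b ξ ∂P)
        = ∑ a, ∫ ξ, ∑ b, F a b ξ ∂P :=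
          Finset.sum_congr rfl fun a _ =>
            (integral_finset_sum _ fun b _ => hIntF a b).symm
      _ = ∫ ξ, ∑ a, ∑ b, F a b ξ ∂P :=
          (integral_finset_sum _ fun a _ =>
            integrable_finset_sum _ fun b _ => hIntF a b).symm
  -- pointwise bound
  have hpt : ∀ ξ, (∑ a, ∑ b, F a b ξ) ≤ gfun k ylow ξ := by
    intro ξ
    obtain ⟨i0, hi0⟩ := exists_eq_ciInf_of_finite (f := ξ)
    by_cases hc : (⨅ i, ξ i) ≤ ylow
    · have := snoc_dot k ylow M hM ξ i0.succ
      rw [cdot_succ] at this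
      have hg : gfun k ylow ξ = ξ i0 - ylow := by
        rw [gfun, min_eq_left hc, ← hi0]
      rw [hg]
      exact this
    · have := snoc_dot k ylow M hM ξ 0
      rw [cdot_zero] at this
      have hg : gfun k ylow ξ = 0 := by
        rw [gfun, min_eq_right (le_of_not_ge hc), sub_self]
      rw [hg]
      exact this
  -- integrability of gfun
  have hmeas : Measurable (gfun k ylow) := by
    apply Measurable.sub _ measurable_const
    exact (Measurable.min (Measurable.iInf fun i => measurable_pi_apply i) measurable_const)
  have hIntg : Integrable (gfun k ylow) P := by
    have hbound : ∀ ξ, ‖gfun k ylow ξ‖ ≤ ‖(∑ i, |ξ i|) + 2 * |ylow|‖ := by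
      intro ξ
      obtain ⟨i0, hi0⟩ := exists_eq_ciInf_of_finite (f := ξ)
      have h1 : |ξ i0| ≤ ∑ i, |ξ i| :=
        Finset.single_le_sum (fun i _ => abs_nonneg (ξ i)) (Finset.mem_univ i0)
      have h2 : (0:ℝ) ≤ (∑ i, |ξ i|) + 2 * |ylow| := by
        have : (0:ℝ) ≤ ∑ i, |ξ i| := Finset.sum_nonneg fun i _ => abs_nonneg (ξ i)
        have := abs_nonneg ylow
        linarith
      rw [Real.norm_eq_abs, Real.norm_eq_abs, abs_of_nonneg h2]
      have hmin : min (⨅ i, ξ i) ylow ≤ ylow := min_le_right _ _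
      have hmin2 : -((∑ i, |ξ i|) + |ylow|) ≤ min (⨅ i, ξ i) ylow := by
        apply le_min
        · rw [← hi0]
          have := neg_abs_le (ξ i0)
          have := abs_nonneg ylow
          linarith
        · have := neg_abs_le ylow
          have : (0:ℝ) ≤ ∑ i, |ξ i| := Finset.sum_nonneg fun i _ => abs_nonneg (ξ i)
          linarith [neg_abs_le ylow]
      rw [gfun, abs_le]
      constructor
      · have := abs_nonneg ylow
        have hy := neg_abs_le ylow
        have hy2 := le_abs_self ylow
        linarith
      · have hy2 := le_abs_self ylow
        have : (0:ℝ) ≤ ∑ i, |ξ i| := Finset.sum_nonneg fun i _ => abs_nonneg (ξ i)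
        have := abs_nonneg ylow
        linarith [neg_abs_le ylow]
    exact Integrable.mono
      ((integrable_finset_sum _ (fun i _ => (hInt1 i).abs)).add
        (integrable_const (2 * |ylow|)))
      hmeas.aestronglyMeasurable
      (Filter.Eventually.of_forall hbound)
  rw [hswap]
  exact integral_mono (integrable_finset_sum _ (fun a _ => integrable_finset_sum _ (fun b _ => hIntF a b))) hIntg hpt
end

section
/- Let k ≥ 1 and let M be a real symmetric (k+1)×(k+1) matrix that is feasible for the primal SDP (P). Then the upper-left k×k block M₁₁ of M is negative definite. (Lemma 1 / Lemma 'PositiveDefinite' of the paper.) -/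
open Matrix MeasureTheory

/-- **Lemma 1 ('PositiveDefinite') of the paper.** For any feasible `M` of (P), the
upper-left `k × k` block `M₁₁` is negative definite. -/
theorem upperLeftBlock_negDef (k : ℕ) (hk : 1 ≤ k) (ylow : ℝ)
    (M : Matrix (Fin (k + 1)) (Fin (k + 1)) ℝ) (hM : PFeasible k ylow M) :
    (-(M.submatrix (Fin.castSucc : Fin k → Fin (k + 1)) Fin.castSucc)).PosDef := by
  have hsymm : ∀ a b, M b a = M a b := fun a b => hM.1.apply a b
  -- (-M) is PSD, from the constraint with i = 0
  have hM0 : (-M).PosSemidef := by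
    have h0 := hM.2 0
    simpa [Cmat, zero_sub] using h0
  have hNpsd : (-(M.submatrix (Fin.castSucc : Fin k → Fin (k + 1)) Fin.castSucc)).PosSemidef := by
    have := hM0.submatrix (Fin.castSucc : Fin k → Fin (k + 1))
    exact this
  refine PosDef.of_dotProduct_mulVec_pos hNpsd.1 fun x hx => ?_
  rcases lt_or_eq_of_le (hNpsd.dotProduct_mulVec_nonneg x) with h | h
  · exact h
  exfalso
  -- the extended vector
  set x' : Fin (k + 1) → ℝ := Fin.snoc x 0 with hx'
  have hdp : star x' ⬝ᵥ (-M) *ᵥ x' =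
      star x ⬝ᵥ (-(M.submatrix (Fin.castSucc : Fin k → Fin (k + 1)) Fin.castSucc)) *ᵥ x := by
    simp [dotProduct, mulVec, Fin.sum_univ_castSucc, hx', Finset.mul_sum]
  have hker : (-M) *ᵥ x' = 0 := by
    rw [← hM0.dotProduct_mulVec_zero_iff]
    rw [hdp, ← h]
  -- row facts
  have hrow : ∀ a : Fin (k + 1), ∑ j : Fin k, M a j.castSucc * x j = 0 := by
    intro a
    have := congrFun hker a
    simp only [mulVec, dotProduct, Pi.zero_apply, Matrix.neg_apply, Fin.sum_univ_castSucc, hx',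
      Fin.snoc_castSucc, Fin.snoc_last, mul_zero, add_zero] at this
    have : -∑ j : Fin k, M a j.castSucc * x j = 0 := by
      rw [← this]; simp [Finset.sum_neg_distrib]
    linarith [this]
  -- pick a coordinate where x is nonzero
  obtain ⟨i₀, hi₀⟩ := Function.ne_iff.mp hx
  have hA := hM.2 i₀.succ
  have hCsucc : Cmat k ylow i₀.succ = Matrix.of fun a b =>
      if a = Fin.last k ∧ b = Fin.last k then -ylow
      else if a = i₀.castSucc ∧ b = Fin.last k then 1 / 2
      else if a = Fin.last k ∧ b = i₀.castSucc then 1 / 2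
      else 0 := by
    simp [Cmat]
  set c : ℝ := -ylow - M (Fin.last k) (Fin.last k) with hc
  -- quadratic form along the perturbed vector
  have hq : ∀ t : ℝ, 0 ≤ t * x i₀ + t ^ 2 * c := by
    intro t
    have hpos := hA.dotProduct_mulVec_nonneg (Fin.snoc x t)
    have hcl : ∀ j : Fin k, (j.castSucc : Fin (k + 1)) ≠ Fin.last k :=
      fun j => Fin.ne_last_of_lt (Fin.castSucc_lt_last j)
    have E1 : ∀ i j : Fin k, (Cmat k ylow i₀.succ) i.castSucc j.castSucc = 0 := by
      intro i j; simp [hCsucc, hcl i, hcl j]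
    have E2 : ∀ i : Fin k, (Cmat k ylow i₀.succ) i.castSucc (Fin.last k)
        = if i = i₀ then (1:ℝ)/2 else 0 := by
      intro i
      by_cases hi : i = i₀
      · simp [hCsucc, hi, hcl i₀]
      · simp [hCsucc, hcl i, hi, Fin.castSucc_inj]
    have E3 : ∀ j : Fin k, (Cmat k ylow i₀.succ) (Fin.last k) j.castSucc
        = if j = i₀ then (1:ℝ)/2 else 0 := by
      intro j
      by_cases hj : j = i₀
      · simp [hCsucc, hj, hcl i₀, Ne.symm (hcl i₀)]
      · simp [hCsucc, hcl j, hj, Fin.castSucc_inj, Ne.symm (hcl i₀)]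
    have E4 : (Cmat k ylow i₀.succ) (Fin.last k) (Fin.last k) = -ylow := by
      simp [hCsucc]
    have hexp : star (Fin.snoc x t : Fin (k + 1) → ℝ) ⬝ᵥ
        (Cmat k ylow i₀.succ - M) *ᵥ (Fin.snoc x t) = t * x i₀ + t ^ 2 * c := by
      simp only [dotProduct, mulVec, Fin.sum_univ_castSucc, Fin.snoc_castSucc, Fin.snoc_last,
        Matrix.sub_apply, Pi.star_apply, star_trivial, E1, E2, E3, E4]
      have S1 : ∀ i : Fin k, ∑ j : Fin k, ((0:ℝ) - M i.castSucc j.castSucc) * x j = 0 := by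
        intro i
        have : ∑ j : Fin k, ((0:ℝ) - M i.castSucc j.castSucc) * x j
            = -∑ j : Fin k, M i.castSucc j.castSucc * x j := by
          rw [← Finset.sum_neg_distrib]
          exact Finset.sum_congr rfl fun j _ => by ring
        rw [this, hrow i.castSucc, neg_zero]
      simp only [S1, zero_add]
      have S2 : ∑ i : Fin k,
          x i * (((if i = i₀ then (1:ℝ)/2 else 0) - M i.castSucc (Fin.last k)) * t)
          = x i₀ * (1/2) * t - 0 * t := by
        have key : ∀ i : Fin k,
            x i * (((if i = i₀ then (1:ℝ)/2 else 0) - M i.castSucc (Fin.last k)) * t)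
            = (if i = i₀ then x i₀ * (1/2) * t else 0) - M (Fin.last k) i.castSucc * x i * t := by
          intro i
          by_cases hi : i = i₀ <;> simp [hi, hsymm] <;> ring
        rw [Finset.sum_congr rfl fun i _ => key i, Finset.sum_sub_distrib,
          Finset.sum_ite_eq', ← Finset.sum_mul, hrow (Fin.last k)]
        simp
      have S3 : ∑ j : Fin k,
          ((if j = i₀ then (1:ℝ)/2 else 0) - M (Fin.last k) j.castSucc) * x j
          = x i₀ * (1/2) - 0 := by
        have key : ∀ j : Fin k,
            ((if j = i₀ then (1:ℝ)/2 else 0) - M (Fin.last k) j.castSucc) * x j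
            = (if j = i₀ then x i₀ * (1/2) else 0) - M (Fin.last k) j.castSucc * x j := by
          intro j
          by_cases hj : j = i₀ <;> simp [hj] <;> ring
        rw [Finset.sum_congr rfl fun j _ => key j, Finset.sum_sub_distrib,
          Finset.sum_ite_eq', hrow (Fin.last k)]
        simp
      rw [S2, S3, hc]
      ring
    rw [hexp] at hpos
    exact hpos
  -- derive a contradiction
  set a : ℝ := x i₀ with ha
  have ha0 : a ≠ 0 := by simpa using hi₀
  have hd : (0:ℝ) < |c| + 1 := by positivity
  have := hq (-(a / (|c| + 1)))
  have habs1 : c ≤ |c| := le_abs_self c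
  have habs2 : -|c| ≤ c := neg_abs_le c
  have e1 : -(a / (|c| + 1)) * a + (-(a / (|c| + 1))) ^ 2 * c
      = a ^ 2 / (|c| + 1) ^ 2 * (c - (|c| + 1)) := by
    field_simp
    ring
  rw [e1] at this
  have h2 : 0 < a ^ 2 / (|c| + 1) ^ 2 := by positivity
  nlinarith [mul_pos h2 (show (0:ℝ) < (|c| + 1) - c by linarith)]
end

section
/- Let k ≥ 1, let Ω be a real symmetric positive definite (k+1)×(k+1) matrix, and let (M̄, Ȳ_0, …, Ȳ_k) be a KKT pair for (P) at Ω. Then for every i = 0,…,k: rank(Ȳ_i) = 1, rank(M̄ − C_i) = k, and the column space of Ȳ_i equals the null space of M̄ − C_i. (Lemma 2 / Lemma 'dualProperties' of the paper.) -/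
open Matrix MeasureTheory

/-- A KKT pair for (P) at `Ω`: a feasible `M̄` together with positive semidefinite
multipliers `Ȳ_0, …, Ȳ_k` with `∑ Ȳ_i = Ω` and `Ȳ_i (M̄ - C_i) = 0` for all `i`. -/
def KKTpair (k : ℕ) (ylow : ℝ) (Ω M : Matrix (Fin (k + 1)) (Fin (k + 1)) ℝ)
    (Y : Fin (k + 1) → Matrix (Fin (k + 1)) (Fin (k + 1)) ℝ) : Prop :=
  PFeasible k ylow M ∧ (∀ i, (Y i).PosSemidef) ∧ (∑ i, Y i) = Ω ∧
    ∀ i, Y i * (M - Cmat k ylow i) = 0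

lemma Cmat_zero (k : ℕ) (ylow : ℝ) : Cmat k ylow 0 = 0 := rfl

lemma Cmat_succ (k : ℕ) (ylow : ℝ) (j : Fin k) : Cmat k ylow j.succ =
    Matrix.of fun a b =>
      if a = Fin.last k ∧ b = Fin.last k then -ylow
      else if a = j.castSucc ∧ b = Fin.last k then 1 / 2
      else if a = Fin.last k ∧ b = j.castSucc then 1 / 2
      else 0 := by
  simp [Cmat]

lemma quad_zero (k : ℕ) (ylow : ℝ) (i : Fin (k+1)) (u : Fin (k+1) → ℝ)
    (hu : u (Fin.last k) = 0) : u ⬝ᵥ (Cmat k ylow i) *ᵥ u = 0 := by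
  induction i using Fin.cases with
  | zero => simp [Cmat_zero]
  | succ j =>
    rw [Cmat_succ]
    apply Finset.sum_eq_zero
    intro a _
    by_cases ha : a = Fin.last k
    · rw [ha, hu, zero_mul]
    · have h2 : ((Matrix.of fun a b =>
          if a = Fin.last k ∧ b = Fin.last k then -ylow
          else if a = j.castSucc ∧ b = Fin.last k then 1 / 2
          else if a = Fin.last k ∧ b = j.castSucc then (1:ℝ) / 2
          else 0) *ᵥ u) a = 0 := by
        simp only [Matrix.mulVec, dotProduct]
        apply Finset.sum_eq_zero
        intro b _
        by_cases hb : b = Fin.last k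
        · rw [hb, hu, mul_zero]
        · have : (Matrix.of fun a b =>
            if a = Fin.last k ∧ b = Fin.last k then -ylow
            else if a = j.castSucc ∧ b = Fin.last k then 1 / 2
            else if a = Fin.last k ∧ b = j.castSucc then (1:ℝ) / 2
            else 0) a b = 0 := by
            simp only [Matrix.of_apply]
            split_ifs with h1 h2 h3 <;> tauto
          rw [this, zero_mul]
      rw [h2, mul_zero]

lemma Cmat_mulVec_last (k : ℕ) (ylow : ℝ) (j : Fin k) (u : Fin (k+1) → ℝ) :
    ((Cmat k ylow j.succ) *ᵥ u) (Fin.last k)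
      = -ylow * u (Fin.last k) + (1/2) * u j.castSucc := by
  have hne : j.castSucc ≠ Fin.last k := (Fin.castSucc_lt_last j).ne
  rw [Cmat_succ]
  calc ((Matrix.of fun a b =>
      if a = Fin.last k ∧ b = Fin.last k then -ylow
      else if a = j.castSucc ∧ b = Fin.last k then 1 / 2
      else if a = Fin.last k ∧ b = j.castSucc then (1:ℝ) / 2
      else 0) *ᵥ u) (Fin.last k)
      = ∑ b, (if Fin.last k = Fin.last k ∧ b = Fin.last k then -ylow
      else if Fin.last k = j.castSucc ∧ b = Fin.last k then 1 / 2
      else if Fin.last k = Fin.last k ∧ b = j.castSucc then (1:ℝ) / 2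
      else 0) * u b := rfl
    _ = ∑ b, ((if b = Fin.last k then -ylow * u b else 0)
        + (if b = j.castSucc then (1/2) * u b else 0)) := by
        refine Finset.sum_congr rfl fun b _ => ?_
        by_cases hb : b = Fin.last k
        · subst hb; simp [hne.symm]
        · by_cases hb2 : b = j.castSucc
          · subst hb2; simp [hne, hne.symm]
          · simp [hb, hb2]
    _ = -ylow * u (Fin.last k) + (1/2) * u j.castSucc := by
        rw [Finset.sum_add_distrib, Finset.sum_ite_eq' Finset.univ (Fin.last k),
          Finset.sum_ite_eq' Finset.univ j.castSucc]
        simp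

lemma ker_last_zero (k : ℕ) (ylow : ℝ) (M : Matrix (Fin (k+1)) (Fin (k+1)) ℝ)
    (hfeas : ∀ i : Fin (k+1), (Cmat k ylow i - M).PosSemidef)
    (i : Fin (k+1)) (u : Fin (k+1) → ℝ)
    (hu : (M - Cmat k ylow i) *ᵥ u = 0) (hlast : u (Fin.last k) = 0) : u = 0 := by
  have hstar : star u = u := by funext a; simp
  have hMu : M *ᵥ u = (Cmat k ylow i) *ᵥ u := by
    rw [Matrix.sub_mulVec] at hu
    exact sub_eq_zero.mp hu
  have hquadM : u ⬝ᵥ M *ᵥ u = 0 := by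
    rw [hMu]; exact quad_zero k ylow i u hlast
  have hM0 : M *ᵥ u = 0 := by
    have h := (hfeas 0).dotProduct_mulVec_zero_iff u
    rw [hstar, Cmat_zero, zero_sub, Matrix.neg_mulVec, dotProduct_neg, hquadM, neg_zero] at h
    exact neg_eq_zero.mp (h.mp rfl)
  have hcoord : ∀ j : Fin k, u j.castSucc = 0 := by
    intro j
    have hq : u ⬝ᵥ (Cmat k ylow j.succ - M) *ᵥ u = 0 := by
      rw [Matrix.sub_mulVec, dotProduct_sub, hquadM, sub_zero]
      exact quad_zero k ylow j.succ u hlast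
    have h := (hfeas j.succ).dotProduct_mulVec_zero_iff u
    rw [hstar] at h
    have h0 := h.mp hq
    rw [Matrix.sub_mulVec, hM0, sub_zero] at h0
    have hlst := congrFun h0 (Fin.last k)
    rw [Cmat_mulVec_last k ylow j u, hlast] at hlst
    simp only [mul_zero, zero_add, Pi.zero_apply] at hlst
    linarith
  funext a
  induction a using Fin.lastCases with
  | last => exact hlast
  | cast j => exact hcoord j

lemma finrank_finset_sup_le {V : Type*} [AddCommGroup V] [Module ℝ V]
    [FiniteDimensional ℝ V] {ι : Type*} [DecidableEq ι]
    (s : Finset ι) (p : ι → Submodule ℝ V) :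
    Module.finrank ℝ ↥(s.sup p) ≤ ∑ i ∈ s, Module.finrank ℝ ↥(p i) := by
  induction s using Finset.induction with
  | empty => simp
  | insert a s hnot ih =>
    rw [Finset.sup_insert, Finset.sum_insert hnot]
    have heq := Submodule.finrank_sup_add_finrank_inf_eq (p a) (s.sup p)
    omega

/-- **Lemma 2 ('dualProperties') of the paper.** If `Ω ≻ 0` and `(M̄, Ȳ_0, …, Ȳ_k)` is a
KKT pair for (P) at `Ω`, then each `Ȳ_i` has rank one, each `M̄ - C_i` has rank `k`, and the
column space of `Ȳ_i` equals the null space of `M̄ - C_i`. -/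
theorem dualProperties (k : ℕ) (hk : 1 ≤ k) (ylow : ℝ)
    (Ω : Matrix (Fin (k + 1)) (Fin (k + 1)) ℝ) (hΩ : Ω.PosDef)
    (M : Matrix (Fin (k + 1)) (Fin (k + 1)) ℝ)
    (Y : Fin (k + 1) → Matrix (Fin (k + 1)) (Fin (k + 1)) ℝ)
    (hKKT : KKTpair k ylow Ω M Y) :
    ∀ i : Fin (k + 1),
      (Y i).rank = 1 ∧ (M - Cmat k ylow i).rank = k ∧
        LinearMap.range (Y i).mulVecLin = LinearMap.ker (M - Cmat k ylow i).mulVecLin := by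
  obtain ⟨⟨hMsymm, hfeas⟩, hYpsd, hYsum, hcomp⟩ := hKKT
  set N : Fin (k+1) → Submodule ℝ (Fin (k+1) → ℝ) :=
    fun i => LinearMap.ker (M - Cmat k ylow i).mulVecLin with hN
  set R : Fin (k+1) → Submodule ℝ (Fin (k+1) → ℝ) :=
    fun i => LinearMap.range (Y i).mulVecLin with hR
  have hdim : ∀ i, Module.finrank ℝ (N i) ≤ 1 := by
    intro i
    let φ : N i →ₗ[ℝ] ℝ := (LinearMap.proj (Fin.last k)).comp (N i).subtype
    have hinj : Function.Injective φ := by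
      rw [← LinearMap.ker_eq_bot, LinearMap.ker_eq_bot']
      rintro ⟨u, hu⟩ h0
      have hu' : (M - Cmat k ylow i) *ᵥ u = 0 := hu
      have hl : u (Fin.last k) = 0 := h0
      exact Subtype.ext (ker_last_zero k ylow M hfeas i u hu' hl)
    calc Module.finrank ℝ (N i) ≤ Module.finrank ℝ ℝ :=
          LinearMap.finrank_le_finrank_of_injective hinj
      _ = 1 := Module.finrank_self ℝ
  have hRN : ∀ i, R i ≤ N i := by
    intro i
    have hYsymm : (Y i)ᵀ = Y i := by
      rw [← Matrix.conjTranspose_eq_transpose_of_trivial]; exact (hYpsd i).1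
    have hDsymm : (M - Cmat k ylow i)ᵀ = M - Cmat k ylow i := by
      have h1 : (Cmat k ylow i - M)ᴴ = Cmat k ylow i - M := (hfeas i).1
      rw [Matrix.conjTranspose_eq_transpose_of_trivial] at h1
      rw [show M - Cmat k ylow i = -(Cmat k ylow i - M) from (neg_sub _ _).symm,
        Matrix.transpose_neg, h1]
    have hmul : (M - Cmat k ylow i) * Y i = 0 := by
      have h2 := congrArg Matrix.transpose (hcomp i)
      rwa [Matrix.transpose_mul, hYsymm, hDsymm, Matrix.transpose_zero] at h2
    rintro x ⟨v, rfl⟩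
    show (M - Cmat k ylow i) *ᵥ ((Y i).mulVecLin v) = 0
    rw [Matrix.mulVecLin_apply, Matrix.mulVec_mulVec, hmul, Matrix.zero_mulVec]
  have hsumv : ∀ x : Fin (k+1) → ℝ, (∑ i, Y i) *ᵥ x = ∑ i, Y i *ᵥ x := by
    intro x; funext a
    rw [Finset.sum_apply]
    simp only [Matrix.mulVec, dotProduct, Matrix.sum_apply, Finset.sum_mul]
    exact Finset.sum_comm
  have htopR : (⊤ : Submodule ℝ (Fin (k+1) → ℝ)) ≤ ⨆ i, R i := by
    intro v _
    have hdet : IsUnit Ω.det := isUnit_iff_ne_zero.mpr hΩ.det_pos.ne'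
    have hv : ∃ x, v = Ω *ᵥ x :=
      ⟨Ω⁻¹ *ᵥ v, by rw [Matrix.mulVec_mulVec, Matrix.mul_nonsing_inv Ω hdet, Matrix.one_mulVec]⟩
    obtain ⟨x, rfl⟩ := hv
    rw [← hYsum, hsumv]
    exact Submodule.sum_mem _ fun i _ => Submodule.mem_iSup_of_mem i ⟨x, rfl⟩
  have hcard : ∀ (p : Fin (k+1) → Submodule ℝ (Fin (k+1) → ℝ)),
      (⊤ : Submodule ℝ (Fin (k+1) → ℝ)) ≤ ⨆ i, p i →
      (∀ i, Module.finrank ℝ (p i) ≤ 1) → ∀ i, Module.finrank ℝ (p i) = 1 := by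
    intro p htop hle i
    have h1 : Module.finrank ℝ (⊤ : Submodule ℝ (Fin (k+1) → ℝ)) = k + 1 := by
      rw [finrank_top, Module.finrank_fin_fun]
    have h2 : Module.finrank ℝ (⊤ : Submodule ℝ (Fin (k+1) → ℝ))
        ≤ Module.finrank ℝ ↥(⨆ j, p j) := Submodule.finrank_mono htop
    have h3 : Module.finrank ℝ ↥(⨆ j, p j) ≤ ∑ j, Module.finrank ℝ ↥(p j) := by
      rw [← Finset.sup_univ_eq_iSup]
      exact finrank_finset_sup_le Finset.univ p
    have hsplit : ∑ j : Fin (k+1), Module.finrank ℝ ↥(p j)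
        = Module.finrank ℝ ↥(p i) + ∑ j ∈ Finset.univ.erase i, Module.finrank ℝ ↥(p j) :=
      (Finset.add_sum_erase Finset.univ (fun j => Module.finrank ℝ ↥(p j))
        (Finset.mem_univ i)).symm
    have hb : ∑ j ∈ Finset.univ.erase i, Module.finrank ℝ ↥(p j)
        ≤ ∑ j ∈ Finset.univ.erase i, 1 :=
      Finset.sum_le_sum fun j _ => hle j
    rw [Finset.sum_const, smul_eq_mul, mul_one, Finset.card_erase_of_mem (Finset.mem_univ i),
      Finset.card_univ, Fintype.card_fin] at hb
    have := hle i
    omega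
  have hNrank : ∀ i, Module.finrank ℝ (N i) = 1 :=
    hcard N (le_trans htopR (iSup_mono hRN)) hdim
  have hRrank : ∀ i, Module.finrank ℝ (R i) = 1 :=
    hcard R htopR (fun i => le_trans (Submodule.finrank_mono (hRN i)) (le_of_eq (hNrank i)))
  intro i
  have hRNeq : R i = N i :=
    Submodule.eq_of_le_of_finrank_le (hRN i) (by rw [hRrank i, hNrank i])
  refine ⟨hRrank i, ?_, hRNeq⟩
  have hrn := LinearMap.finrank_range_add_finrank_ker (M - Cmat k ylow i).mulVecLin
  rw [Module.finrank_fin_fun] at hrn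
  have hk2 : Module.finrank ℝ ↥(LinearMap.ker (M - Cmat k ylow i).mulVecLin) = 1 := hNrank i
  show Module.finrank ℝ ↥(LinearMap.range (M - Cmat k ylow i).mulVecLin) = k
  omega
end

section
/- Let n ≥ 1 and let α₁ : ℝⁿ → ℝ and α₂ : ℝⁿ × ℝⁿ → ℝ satisfy: α₂(x, y) = α₂(y, x) for all x, y ∈ ℝⁿ; α₂(x, y) ≤ α₁(x) for all x, y ∈ ℝⁿ; and α₂(x, x) = α₁(x) for all x ∈ ℝⁿ. Suppose α₁ is Fréchet differentiable at some point x₀ with nonzero derivative. Then α₂ is not Fréchet differentiable at (x₀, x₀). (Core of Proposition 1 in Appendix D of the paper: the two-point expected improvement α₂, which is symmetric, lower-bounds the one-point expected improvement α₁ and agrees with it on the diagonal, is non-differentiable at perfectly correlated batch points where α₁ has a descent direction.) -/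
/-- **Core of Proposition 1 (Appendix D) of the paper.** Let `α₂` be symmetric, bounded
above by `α₁` in its first argument, and agreeing with `α₁` on the diagonal (as the
two-point and one-point expected improvement do). If `α₁` is Fréchet differentiable at `x₀`
with nonzero derivative, then `α₂` is not Fréchet differentiable at `(x₀, x₀)`. -/
theorem twoPoint_not_differentiable (n : ℕ) (hn : 1 ≤ n)
    (α₁ : (Fin n → ℝ) → ℝ) (α₂ : (Fin n → ℝ) × (Fin n → ℝ) → ℝ)
    (hsymm : ∀ x y : Fin n → ℝ, α₂ (x, y) = α₂ (y, x))
    (hle : ∀ x y : Fin n → ℝ, α₂ (x, y) ≤ α₁ x)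
    (hdiag : ∀ x : Fin n → ℝ, α₂ (x, x) = α₁ x)
    (x₀ : Fin n → ℝ)
    (hdiff : DifferentiableAt ℝ α₁ x₀) (hne : fderiv ℝ α₁ x₀ ≠ 0) :
    ¬ DifferentiableAt ℝ α₂ (x₀, x₀) := by
  intro hd
  set L := fderiv ℝ α₁ x₀ with hL
  set D := fderiv ℝ α₂ (x₀, x₀) with hD
  have hDa : HasFDerivAt α₂ D (x₀, x₀) := hd.hasFDerivAt
  have hLa : HasFDerivAt α₁ L x₀ := hdiff.hasFDerivAt
  -- first partial derivative
  have hin1 : HasFDerivAt (fun x : Fin n → ℝ => ((x, x₀) : (Fin n → ℝ) × (Fin n → ℝ)))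
      ((ContinuousLinearMap.id ℝ (Fin n → ℝ)).prod 0) x₀ :=
    HasFDerivAt.prodMk (hasFDerivAt_id x₀) (hasFDerivAt_const x₀ x₀)
  have hg1 : HasFDerivAt (fun x : Fin n → ℝ => α₂ (x, x₀))
      (D.comp ((ContinuousLinearMap.id ℝ (Fin n → ℝ)).prod 0)) x₀ :=
    HasFDerivAt.comp (f := fun x : Fin n → ℝ => ((x, x₀) : (Fin n → ℝ) × (Fin n → ℝ)))
      (g := α₂) x₀ hDa hin1
  have hmin1 : IsLocalMin (fun x : Fin n → ℝ => α₁ x - α₂ (x, x₀)) x₀ := by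
    apply Filter.Eventually.of_forall
    intro x
    simp only
    have h1 := hle x x₀
    have h2 := hdiag x₀
    linarith
  have hder1 : L - D.comp ((ContinuousLinearMap.id ℝ (Fin n → ℝ)).prod 0) = 0 :=
    hmin1.hasFDerivAt_eq_zero (hLa.sub hg1)
  -- second partial derivative
  have hin2 : HasFDerivAt (fun x : Fin n → ℝ => ((x₀, x) : (Fin n → ℝ) × (Fin n → ℝ)))
      ((0 : (Fin n → ℝ) →L[ℝ] (Fin n → ℝ)).prod (ContinuousLinearMap.id ℝ (Fin n → ℝ))) x₀ :=
    HasFDerivAt.prodMk (hasFDerivAt_const x₀ x₀) (hasFDerivAt_id x₀)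
  have hg2 : HasFDerivAt (fun x : Fin n → ℝ => α₂ (x₀, x))
      (D.comp ((0 : (Fin n → ℝ) →L[ℝ] (Fin n → ℝ)).prod
        (ContinuousLinearMap.id ℝ (Fin n → ℝ)))) x₀ :=
    HasFDerivAt.comp (f := fun x : Fin n → ℝ => ((x₀, x) : (Fin n → ℝ) × (Fin n → ℝ)))
      (g := α₂) x₀ hDa hin2
  have hmin2 : IsLocalMin (fun x : Fin n → ℝ => α₁ x - α₂ (x₀, x)) x₀ := by
    apply Filter.Eventually.of_forall
    intro x
    simp only
    have h1 := hle x x₀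
    have h2 := hsymm x₀ x
    have h3 := hdiag x₀
    linarith
  have hder2 : L - D.comp ((0 : (Fin n → ℝ) →L[ℝ] (Fin n → ℝ)).prod
      (ContinuousLinearMap.id ℝ (Fin n → ℝ))) = 0 :=
    hmin2.hasFDerivAt_eq_zero (hLa.sub hg2)
  -- diagonal
  have hind : HasFDerivAt (fun x : Fin n → ℝ => ((x, x) : (Fin n → ℝ) × (Fin n → ℝ)))
      ((ContinuousLinearMap.id ℝ (Fin n → ℝ)).prod (ContinuousLinearMap.id ℝ (Fin n → ℝ))) x₀ :=
    HasFDerivAt.prodMk (hasFDerivAt_id x₀) (hasFDerivAt_id x₀)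
  have hdiagd : HasFDerivAt (fun x : Fin n → ℝ => α₂ (x, x))
      (D.comp ((ContinuousLinearMap.id ℝ (Fin n → ℝ)).prod
        (ContinuousLinearMap.id ℝ (Fin n → ℝ)))) x₀ :=
    HasFDerivAt.comp (f := fun x : Fin n → ℝ => ((x, x) : (Fin n → ℝ) × (Fin n → ℝ)))
      (g := α₂) x₀ hDa hind
  have heq : (fun x : Fin n → ℝ => α₂ (x, x)) = α₁ := funext hdiag
  rw [heq] at hdiagd
  have hder3 : D.comp ((ContinuousLinearMap.id ℝ (Fin n → ℝ)).prod
      (ContinuousLinearMap.id ℝ (Fin n → ℝ))) = L := hdiagd.unique hLa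
  apply hne
  ext v
  have e1 : L v = D (v, 0) := by
    have := congrArg (fun f : (Fin n → ℝ) →L[ℝ] ℝ => f v) hder1
    simpa [sub_eq_zero] using this
  have e2 : L v = D (0, v) := by
    have := congrArg (fun f : (Fin n → ℝ) →L[ℝ] ℝ => f v) hder2
    simpa [sub_eq_zero] using this
  have e3 : D (v, v) = L v := by
    have := congrArg (fun f : (Fin n → ℝ) →L[ℝ] ℝ => f v) hder3
    simpa using this
  have hsplit : D (v, v) = D (v, 0) + D (0, v) := by
    rw [← D.map_add]
    norm_num
  simp only [ContinuousLinearMap.zero_apply]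
  linarith
end
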